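/- arXiv:1606.05039 — 19 statements merged into one kernel-verified Lean document; each statement's English description precedes it below -/
import Mathlib

section
/- Let k ≥ 2 be an integer and set A = 6 if k = 2, A = 7 if k = 3, and A = 2k if k ≥ 4. Let f : N → C be an arithmetic function satisfying f(u² + k v²) = f(u)² + k·f(v)² for all positive integers u, v. If f(n) = 0 for every integer n with 1 ≤ n ≤ A, then f(n) = 0 for every positive integer n. -/
theorem arith_fun_char_zero (k : ℕ) (hk : 2 ≤ k)
    (A : ℕ) (hA : A = if k = 2 then 6 else if k = 3 then 7 else 2 * k)
    (f : ℕ → ℂ)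
    (hf : ∀ u v : ℕ, 0 < u → 0 < v →
      f (u ^ 2 + k * v ^ 2) = f u ^ 2 + (k : ℂ) * f v ^ 2)
    (h0 : ∀ n : ℕ, 1 ≤ n → n ≤ A → f n = 0) :
    ∀ n : ℕ, 1 ≤ n → f n = 0 := by
  have hA2k : 2 * k ≤ A := by subst hA; split_ifs <;> omega
  intro n
  induction n using Nat.strong_induction_on with
  | _ m ih =>
    intro hm1
    by_cases hm : m ≤ A
    · exact h0 m hm1 hm
    · obtain ⟨a, rfl⟩ : ∃ a, m = a + 2 * k + 1 := ⟨m - 2 * k - 1, by omega⟩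
      have h1 := hf (a + 2 * k + 1) (a + k) (by omega) (by omega)
      have h2 := hf (a + 1) (a + k + 2) (by omega) (by omega)
      have heq : (a + 2 * k + 1) ^ 2 + k * (a + k) ^ 2
          = (a + 1) ^ 2 + k * (a + k + 2) ^ 2 := by ring
      rw [heq, h2] at h1
      have z1 : f (a + k) = 0 := ih (a + k) (by omega) (by omega)
      have z2 : f (a + 1) = 0 := ih (a + 1) (by omega) (by omega)
      have z3 : f (a + k + 2) = 0 := ih (a + k + 2) (by omega) (by omega)
      rw [z1, z2, z3] at h1
      have hsq : f (a + 2 * k + 1) ^ 2 = 0 := by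
        have := h1.symm
        simpa using this
      exact pow_eq_zero_iff two_ne_zero |>.mp hsq
end

section
/- Let k ≥ 2 be an integer and set A = 6 if k = 2, A = 7 if k = 3, and A = 2k if k ≥ 4. Let f : N → C be an arithmetic function satisfying f(u² + k v²) = f(u)² + k·f(v)² for all positive integers u, v. Suppose that for every integer n with 1 ≤ n ≤ A: f(n) = n whenever there exist positive integers u, v with n = u² + k v², and f(n) = n or f(n) = −n otherwise. Then for every positive integer n: f(n) = n whenever there exist positive integers u, v with n = u² + k v², and f(n) = n or f(n) = −n otherwise. -/
theorem arith_fun_char_id (k : ℕ) (hk : 2 ≤ k)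
    (A : ℕ) (hA : A = if k = 2 then 6 else if k = 3 then 7 else 2 * k)
    (f : ℕ → ℂ)
    (hf : ∀ u v : ℕ, 0 < u → 0 < v →
      f (u ^ 2 + k * v ^ 2) = f u ^ 2 + (k : ℂ) * f v ^ 2)
    (h0 : ∀ n : ℕ, 1 ≤ n → n ≤ A →
      ((∃ u v : ℕ, 0 < u ∧ 0 < v ∧ n = u ^ 2 + k * v ^ 2) → f n = (n : ℂ)) ∧
      (¬ (∃ u v : ℕ, 0 < u ∧ 0 < v ∧ n = u ^ 2 + k * v ^ 2) →
        f n = (n : ℂ) ∨ f n = -(n : ℂ))) :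
    ∀ n : ℕ, 1 ≤ n →
      ((∃ u v : ℕ, 0 < u ∧ 0 < v ∧ n = u ^ 2 + k * v ^ 2) → f n = (n : ℂ)) ∧
      (¬ (∃ u v : ℕ, 0 < u ∧ 0 < v ∧ n = u ^ 2 + k * v ^ 2) →
        f n = (n : ℂ) ∨ f n = -(n : ℂ)) := by
  intro n
  induction n using Nat.strong_induction_on with
  | _ n ih =>
  intro hn1
  by_cases hnA : n ≤ A
  · exact h0 n hn1 hnA
  push_neg at hnA
  -- from induction hypothesis: squares are determined for smaller arguments
  have hsq : ∀ m : ℕ, 1 ≤ m → m < n → f m ^ 2 = (m : ℂ) ^ 2 := by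
    intro m h1 h2
    rcases ih m h2 h1 with ⟨hr, hnr⟩
    by_cases hrep : ∃ u v : ℕ, 0 < u ∧ 0 < v ∧ m = u ^ 2 + k * v ^ 2
    · rw [hr hrep]
    · rcases hnr hrep with h | h <;> rw [h] <;> ring
  have hA2k : 2 * k ≤ A := by subst hA; split_ifs with h2 h3 <;> omega
  have hnk : 2 * k + 1 ≤ n := by omega
  obtain ⟨a, rfl⟩ : ∃ a, n = a + 2 * k + 1 := ⟨n - (2 * k + 1), by omega⟩
  set n := a + 2 * k + 1 with hn
  -- key: f n ^ 2 = n ^ 2, via two representations of the same number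
  have key : f n ^ 2 = (n : ℂ) ^ 2 := by
    have hid : n ^ 2 + k * (a + k) ^ 2 = (a + 1) ^ 2 + k * (a + k + 2) ^ 2 := by
      rw [hn]; ring
    have e1 := hf n (a + k) (by omega) (by omega)
    have e2 := hf (a + 1) (a + k + 2) (by omega) (by omega)
    rw [hid, e2] at e1
    have s1 := hsq (a + k) (by omega) (by omega)
    have s2 := hsq (a + 1) (by omega) (by omega)
    have s3 := hsq (a + k + 2) (by omega) (by omega)
    rw [s1, s2, s3] at e1
    have e1' : f n ^ 2 = ((a:ℂ) + 1) ^ 2 + (k:ℂ) * ((a:ℂ) + (k:ℂ) + 2) ^ 2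
        - (k:ℂ) * ((a:ℂ) + (k:ℂ)) ^ 2 := by
      push_cast at e1 ⊢
      linear_combination -e1
    rw [e1']
    push_cast [hn]
    ring
  have hpm : f n = (n : ℂ) ∨ f n = -(n : ℂ) := by
    have : (f n - (n : ℂ)) * (f n + (n : ℂ)) = 0 := by linear_combination key
    rcases mul_eq_zero.mp this with h | h
    · left; linear_combination h
    · right; linear_combination h
  constructor
  · rintro ⟨u, v, hu, hv, huv⟩
    have hun : u < n := by nlinarith
    have hvn : v < n := by nlinarith
    have := hf u v hu hv
    rw [← huv] at this
    rw [this, hsq u hu hun, hsq v hv hvn, huv]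
    push_cast
    ring
  · intro _
    exact hpm
end

section
/- Let k ≥ 2 be an integer and set A = 6 if k = 2, A = 7 if k = 3, and A = 2k if k ≥ 4. Let f : N → C be an arithmetic function satisfying f(u² + k v²) = f(u)² + k·f(v)² for all positive integers u, v. Suppose that for every integer n with 1 ≤ n ≤ A: f(n) = 1/(k+1) whenever there exist positive integers u, v with n = u² + k v², and f(n) = 1/(k+1) or f(n) = −1/(k+1) otherwise. Then for every positive integer n: f(n) = 1/(k+1) whenever there exist positive integers u, v with n = u² + k v², and f(n) = 1/(k+1) or f(n) = −1/(k+1) otherwise. -/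
theorem arith_fun_char_const (k : ℕ) (hk : 2 ≤ k)
    (A : ℕ) (hA : A = if k = 2 then 6 else if k = 3 then 7 else 2 * k)
    (f : ℕ → ℂ)
    (hf : ∀ u v : ℕ, 0 < u → 0 < v →
      f (u ^ 2 + k * v ^ 2) = f u ^ 2 + (k : ℂ) * f v ^ 2)
    (h0 : ∀ n : ℕ, 1 ≤ n → n ≤ A →
      ((∃ u v : ℕ, 0 < u ∧ 0 < v ∧ n = u ^ 2 + k * v ^ 2) → f n = 1 / ((k : ℂ) + 1)) ∧
      (¬ (∃ u v : ℕ, 0 < u ∧ 0 < v ∧ n = u ^ 2 + k * v ^ 2) →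
        f n = 1 / ((k : ℂ) + 1) ∨ f n = -(1 / ((k : ℂ) + 1)))) :
    ∀ n : ℕ, 1 ≤ n →
      ((∃ u v : ℕ, 0 < u ∧ 0 < v ∧ n = u ^ 2 + k * v ^ 2) → f n = 1 / ((k : ℂ) + 1)) ∧
      (¬ (∃ u v : ℕ, 0 < u ∧ 0 < v ∧ n = u ^ 2 + k * v ^ 2) →
        f n = 1 / ((k : ℂ) + 1) ∨ f n = -(1 / ((k : ℂ) + 1))) := by
  set c : ℂ := 1 / ((k : ℂ) + 1) with hc
  have hk0 : ((k : ℂ) + 1) ≠ 0 := Nat.cast_add_one_ne_zero k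
  have hcc : c ^ 2 + (k : ℂ) * c ^ 2 = c := by
    rw [hc]; field_simp; ring
  intro n hn
  induction n using Nat.strong_induction_on with
  | _ n IH =>
  by_cases hnA : n ≤ A
  · exact h0 n hn hnA
  push_neg at hnA
  have hA2k : 2 * k < n := by
    subst hA; split_ifs at hnA <;> omega
  -- squares of smaller values
  have hsq : ∀ m : ℕ, m < n → 1 ≤ m → f m ^ 2 = c ^ 2 := by
    intro m hm hm1
    rcases IH m hm hm1 with ⟨h1, h2⟩
    by_cases hrep : ∃ u v : ℕ, 0 < u ∧ 0 < v ∧ m = u ^ 2 + k * v ^ 2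
    · rw [h1 hrep]
    · rcases h2 hrep with h | h <;> rw [h] <;> ring
  constructor
  · rintro ⟨u, v, hu, hv, huv⟩
    have hun : u < n := by
      have h1 : u ^ 2 < n := by
        have : 0 < k * v ^ 2 := Nat.mul_pos (by omega) (Nat.pow_pos hv)
        omega
      have := Nat.le_self_pow (two_ne_zero) u
      omega
    have hvn : v < n := by
      have h1 : v ^ 2 < n := by
        have h2 : 0 < u ^ 2 := Nat.pow_pos hu
        have h3 : v ^ 2 ≤ k * v ^ 2 := Nat.le_mul_of_pos_left _ (by omega)
        omega
      have := Nat.le_self_pow (two_ne_zero) v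
      omega
    rw [huv, hf u v hu hv, hsq u hun hu, hsq v hvn hv, hcc]
  · intro _
    -- show f n ^ 2 = c ^ 2 via the identity
    obtain ⟨b, hb⟩ : ∃ b, n = b + 2 * k + 1 := ⟨n - 2 * k - 1, by omega⟩
    obtain ⟨j, hj⟩ : ∃ j, k = j + 2 := ⟨k - 2, by omega⟩
    have key : f n ^ 2 = c ^ 2 := by
      have e1 := hf n (b + j + 2) (by omega) (by omega)
      have e2 := hf (b + 1) (b + j + 4) (by omega) (by omega)
      have harg : n ^ 2 + k * (b + j + 2) ^ 2 = (b + 1) ^ 2 + k * (b + j + 4) ^ 2 := by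
        subst hb hj; ring
      rw [harg, e2] at e1
      have s1 : f (b + j + 2) ^ 2 = c ^ 2 := hsq _ (by omega) (by omega)
      have s2 : f (b + 1) ^ 2 = c ^ 2 := hsq _ (by omega) (by omega)
      have s3 : f (b + j + 4) ^ 2 = c ^ 2 := hsq _ (by omega) (by omega)
      rw [s1, s2, s3] at e1
      linear_combination -e1
    have : (f n - c) * (f n + c) = 0 := by linear_combination key
    rcases mul_eq_zero.mp this with h | h
    · left; exact sub_eq_zero.mp h
    · right; exact eq_neg_of_add_eq_zero_left h
end

section
/- Let f : N → C satisfy f(u² + 2v²) = f(u)² + 2·f(v)² for all positive integers u, v, and write a = f(1), b = f(2). Then f(3)² = 9a⁴, f(4)² = (27a⁴ − 3a² + 2b²)/2, f(5)² = 27a⁴ − 2a², and f(6)² = 36a⁴ − 4a² + b². -/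
theorem squares_formulae_k2 (f : ℕ → ℂ)
    (hf : ∀ u v : ℕ, 0 < u → 0 < v →
      f (u ^ 2 + 2 * v ^ 2) = f u ^ 2 + 2 * f v ^ 2)
    (a b : ℂ) (ha : a = f 1) (hb : b = f 2) :
    f 3 ^ 2 = 9 * a ^ 4 ∧
    f 4 ^ 2 = (27 * a ^ 4 - 3 * a ^ 2 + 2 * b ^ 2) / 2 ∧
    f 5 ^ 2 = 27 * a ^ 4 - 2 * a ^ 2 ∧
    f 6 ^ 2 = 36 * a ^ 4 - 4 * a ^ 2 + b ^ 2 := by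
  subst ha hb
  have h1 := hf 1 1 one_pos one_pos
  have h2 := hf 3 3 (by norm_num) (by norm_num)
  have h3 := hf 5 1 (by norm_num) one_pos
  have h4 := hf 5 2 (by norm_num) (by norm_num)
  have h5 := hf 1 4 one_pos (by norm_num)
  have h6 := hf 6 3 (by norm_num) (by norm_num)
  have h7 := hf 2 5 (by norm_num) (by norm_num)
  norm_num at h1 h2 h3 h4 h5 h6 h7
  have g1 : f 3 ^ 2 = 9 * f 1 ^ 4 := by
    linear_combination (f 3 + 3 * f 1 ^ 2) * h1
  have g3 : f 5 ^ 2 = 27 * f 1 ^ 4 - 2 * f 1 ^ 2 := by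
    linear_combination h2 - h3 + 3 * g1
  refine ⟨g1, ?_, g3, ?_⟩
  · linear_combination (h4 - h5) / 2 + g3 / 2
  · linear_combination h7 - h6 + 2 * g3 - 2 * g1
end

section
/- Let f : N → C satisfy f(u² + 2v²) = f(u)² + 2·f(v)² for all positive integers u, v. Then f(1) ∈ {0, 1, −1, 1/3, −1/3}. -/
theorem value_f1_k2 (f : ℕ → ℂ)
    (hf : ∀ u v : ℕ, 0 < u → 0 < v →
      f (u ^ 2 + 2 * v ^ 2) = f u ^ 2 + 2 * f v ^ 2) :
    f 1 = 0 ∨ f 1 = 1 ∨ f 1 = -1 ∨ f 1 = 1 / 3 ∨ f 1 = -(1 / 3) := by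
  set a := f 1 with ha
  have h3 := hf 1 1 one_pos one_pos
  have h27a := hf 3 3 (by norm_num) (by norm_num)
  have h27b := hf 5 1 (by norm_num) (by norm_num)
  have h51a := hf 7 1 (by norm_num) (by norm_num)
  have h51b := hf 1 5 (by norm_num) (by norm_num)
  have h11 := hf 3 1 (by norm_num) (by norm_num)
  have h19 := hf 1 3 (by norm_num) (by norm_num)
  have h123a := hf 11 1 (by norm_num) (by norm_num)
  have h123b := hf 5 7 (by norm_num) (by norm_num)
  have h363a := hf 19 1 (by norm_num) (by norm_num)
  have h363b := hf 11 11 (by norm_num) (by norm_num)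
  norm_num at h3 h27a h27b h51a h51b h11 h19 h123a h123b h363a h363b
  -- f 3 = 3 a^2
  have h3v : f 3 = 3 * a ^ 2 := by linear_combination h3
  -- f 5 ^ 2 = 27 a^4 - 2 a^2
  have h5 : f 5 ^ 2 = 27 * a ^ 4 - 2 * a ^ 2 := by
    linear_combination h27a - h27b + (3 * f 3 + 9 * a ^ 2) * h3v
  -- f 7 ^ 2 = 54 a^4 - 5 a^2
  have h7 : f 7 ^ 2 = 54 * a ^ 4 - 5 * a ^ 2 := by
    linear_combination h51b - h51a + 2 * h5
  have h11v : f 11 = 9 * a ^ 4 + 2 * a ^ 2 := by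
    linear_combination h11 + (f 3 + 3 * a ^ 2) * h3v
  have h19v : f 19 = a ^ 2 + 18 * a ^ 4 := by
    linear_combination h19 + 2 * (f 3 + 3 * a ^ 2) * h3v
  have eqA : a ^ 2 * (9 * a ^ 4 - 10 * a ^ 2 + 1) * (9 * a ^ 2 + 14) = 0 := by
    linear_combination h123b - h123a - (f 11 + 9 * a ^ 4 + 2 * a ^ 2) * h11v + h5 + 2 * h7
  have eqB : a ^ 2 * (9 * a ^ 4 - 10 * a ^ 2 + 1) * (9 * a ^ 2 + 2) = 0 := by
    linear_combination h363b - h363a - (f 19 + a ^ 2 + 18 * a ^ 4) * h19v +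
      3 * (f 11 + 9 * a ^ 4 + 2 * a ^ 2) * h11v
  have hP : a ^ 2 * ((a - 1) * ((a + 1) * ((3 * a - 1) * (3 * a + 1)))) = 0 := by
    linear_combination (1 / 12 : ℂ) * eqA - (1 / 12 : ℂ) * eqB
  rcases mul_eq_zero.mp hP with h | h
  · exact Or.inl (pow_eq_zero_iff two_ne_zero |>.mp h)
  rcases mul_eq_zero.mp h with h | h
  · exact Or.inr (Or.inl (by linear_combination h))
  rcases mul_eq_zero.mp h with h | h
  · exact Or.inr (Or.inr (Or.inl (by linear_combination h)))
  rcases mul_eq_zero.mp h with h | h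
  · exact Or.inr (Or.inr (Or.inr (Or.inl (by linear_combination h / 3))))
  · exact Or.inr (Or.inr (Or.inr (Or.inr (by linear_combination h / 3))))
end

section
/- Let f : N → C satisfy f(u² + 2v²) = f(u)² + 2·f(v)² for all positive integers u, v. Then one of the following holds: (1) f(n) = 0 for every integer n with 1 ≤ n ≤ 6; (2) f(n) = n for n ∈ {3, 6}, and f(n) = n or f(n) = −n for every other integer n with 1 ≤ n ≤ 6; (3) f(n) = 1/3 for n ∈ {3, 6}, and f(n) = 1/3 or f(n) = −1/3 for every other integer n with 1 ≤ n ≤ 6. -/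
theorem small_range_trichotomy_k2 (f : ℕ → ℂ)
    (hf : ∀ u v : ℕ, 0 < u → 0 < v →
      f (u ^ 2 + 2 * v ^ 2) = f u ^ 2 + 2 * f v ^ 2) :
    (∀ n : ℕ, 1 ≤ n → n ≤ 6 → f n = 0) ∨
    (∀ n : ℕ, 1 ≤ n → n ≤ 6 →
      ((n = 3 ∨ n = 6) → f n = (n : ℂ)) ∧
      (¬ (n = 3 ∨ n = 6) → f n = (n : ℂ) ∨ f n = -(n : ℂ))) ∨
    (∀ n : ℕ, 1 ≤ n → n ≤ 6 →
      ((n = 3 ∨ n = 6) → f n = 1 / 3) ∧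
      (¬ (n = 3 ∨ n = 6) → f n = 1 / 3 ∨ f n = -(1 / 3))) := by
  have sq_cases : ∀ z w : ℂ, z ^ 2 = w ^ 2 → z = w ∨ z = -w := by
    intro z w h
    have h' : (z - w) * (z + w) = 0 := by linear_combination h
    rcases mul_eq_zero.mp h' with h'' | h''
    · left; linear_combination h''
    · right; linear_combination h''
  have h3 := hf 1 1 (by norm_num) (by norm_num)
  have h6 := hf 2 1 (by norm_num) (by norm_num)
  have h9 := hf 1 2 (by norm_num) (by norm_num)
  have h11 := hf 3 1 (by norm_num) (by norm_num)
  have h27a := hf 5 1 (by norm_num) (by norm_num)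
  have h27b := hf 3 3 (by norm_num) (by norm_num)
  have h33a := hf 5 2 (by norm_num) (by norm_num)
  have h33b := hf 1 4 (by norm_num) (by norm_num)
  have h54a := hf 6 3 (by norm_num) (by norm_num)
  have h54b := hf 2 5 (by norm_num) (by norm_num)
  have h99a := hf 9 3 (by norm_num) (by norm_num)
  have h99b := hf 7 5 (by norm_num) (by norm_num)
  have h99c := hf 1 7 (by norm_num) (by norm_num)
  have h123a := hf 11 1 (by norm_num) (by norm_num)
  have h123b := hf 5 7 (by norm_num) (by norm_num)
  norm_num at h3 h6 h9 h11 h27a h27b h33a h33b h54a h54b h99a h99b h99c h123a h123b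
  have hE : f 5 ^ 2 = 27 * f 1 ^ 4 - 2 * f 1 ^ 2 := by
    linear_combination h27b - h27a + 3 * (f 3 + 3 * f 1 ^ 2) * h3
  have hP : f 7 ^ 2 = 2 * f 5 ^ 2 - f 1 ^ 2 := by
    linear_combination h99b - h99c
  have hD : f 4 ^ 2 * 2 = f 5 ^ 2 + 2 * f 2 ^ 2 - f 1 ^ 2 := by
    linear_combination h33a - h33b
  have hE1 : f 2 ^ 4 + (4 * f 1 ^ 2 - 1) * f 2 ^ 2 - 32 * f 1 ^ 4 + 4 * f 1 ^ 2 = 0 := by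
    linear_combination h54b - h54a - (f 6 + f 2 ^ 2 + 2 * f 1 ^ 2) * h6
      - 2 * (f 3 + 3 * f 1 ^ 2) * h3 + 2 * hE
  have hE2 : 4 * f 2 ^ 4 + 4 * f 1 ^ 2 * f 2 ^ 2 - 89 * f 1 ^ 4 + 9 * f 1 ^ 2 = 0 := by
    linear_combination h99c - h99a - (f 9 + f 1 ^ 2 + 2 * f 2 ^ 2) * h9
      - 2 * (f 3 + 3 * f 1 ^ 2) * h3 + 2 * hP + 4 * hE
  have h11' : f 11 = 9 * f 1 ^ 4 + 2 * f 1 ^ 2 := by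
    linear_combination h11 + (f 3 + 3 * f 1 ^ 2) * h3
  have hE4 : 81 * f 1 ^ 8 + 36 * f 1 ^ 6 - 131 * f 1 ^ 4 + 14 * f 1 ^ 2 = 0 := by
    linear_combination h123b - h123a - (f 11 + 9 * f 1 ^ 4 + 2 * f 1 ^ 2) * h11'
      + 5 * hE + 2 * hP
  have hL : (12 * f 1 ^ 2 - 4) * f 2 ^ 2 + 7 * f 1 ^ 2 - 39 * f 1 ^ 4 = 0 := by
    linear_combination 4 * hE1 - hE2
  have key1 : f 1 ^ 2 * (f 1 ^ 2 - 1) * (9 * f 1 ^ 2 - 1) * (15 * f 1 ^ 2 - 4) = 0 := by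
    linear_combination (-1/9) * (12 * f 1 ^ 2 - 4) ^ 2 * hE1
      + (1/9) * ((12 * f 1 ^ 2 - 4) * f 2 ^ 2 + 39 * f 1 ^ 4 - 7 * f 1 ^ 2
        + (4 * f 1 ^ 2 - 1) * (12 * f 1 ^ 2 - 4)) * hL
  have key2 : f 1 ^ 2 * (f 1 ^ 2 - 1) * (9 * f 1 ^ 2 - 1) * (9 * f 1 ^ 2 + 14) = 0 := by
    linear_combination hE4
  have hT : f 1 ^ 2 = 0 ∨ f 1 ^ 2 = 1 ∨ f 1 ^ 2 = 1/9 := by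
    rcases mul_eq_zero.mp key1 with h | h
    · rcases mul_eq_zero.mp h with h | h
      · rcases mul_eq_zero.mp h with h | h
        · exact Or.inl h
        · exact Or.inr (Or.inl (by linear_combination h))
      · exact Or.inr (Or.inr (by linear_combination h / 9))
    · exfalso
      have hT4 : f 1 ^ 2 = 4/15 := by linear_combination h / 15
      rw [hT4] at key2
      norm_num at key2
  rcases hT with h | h | h
  · -- all zero
    have ha : f 1 = 0 := by
      exact sq_eq_zero_iff.mp h
    have hb2 : f 2 ^ 2 = 0 := by
      linear_combination (-1/4) * hL + (3 * f 2 ^ 2 + (7 - 39 * f 1 ^ 2) / 4) * h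
    have hb : f 2 = 0 := sq_eq_zero_iff.mp hb2
    have he2 : f 5 ^ 2 = 0 := by
      linear_combination hE + (27 * f 1 ^ 2 - 2) * h
    have he : f 5 = 0 := sq_eq_zero_iff.mp he2
    have hd2 : f 4 ^ 2 = 0 := by
      linear_combination (1/2) * hD + (1/2) * he2 + hb2 - (1/2) * h
    have hd : f 4 = 0 := sq_eq_zero_iff.mp hd2
    have hc : f 3 = 0 := by linear_combination h3 + 3 * h
    have hg : f 6 = 0 := by linear_combination h6 + hb2 + 2 * h
    left
    intro n h1 h2
    interval_cases n <;> assumption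
  · -- f n = ± n
    have hb2 : f 2 ^ 2 = 4 := by
      linear_combination (1/8) * hL + ((-12 * f 2 ^ 2 + 39 * f 1 ^ 2 + 32) / 8) * h
    have he2 : f 5 ^ 2 = 25 := by
      linear_combination hE + (27 * f 1 ^ 2 + 25) * h
    have hd2 : f 4 ^ 2 = 16 := by
      linear_combination (1/2) * hD + (1/2) * he2 + hb2 - (1/2) * h
    have hc : f 3 = 3 := by linear_combination h3 + 3 * h
    have hg : f 6 = 6 := by linear_combination h6 + hb2 + 2 * h
    have ha' : f 1 = 1 ∨ f 1 = -1 := sq_cases _ _ (by rw [h]; norm_num)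
    have hb' : f 2 = 2 ∨ f 2 = -2 := sq_cases _ _ (by rw [hb2]; norm_num)
    have hd' : f 4 = 4 ∨ f 4 = -4 := sq_cases _ _ (by rw [hd2]; norm_num)
    have he' : f 5 = 5 ∨ f 5 = -5 := sq_cases _ _ (by rw [he2]; norm_num)
    right; left
    intro n h1 h2
    interval_cases n <;> norm_num <;> tauto
  · -- f n = ± 1/3
    have hb2 : f 2 ^ 2 = 1/9 := by
      linear_combination (-3/8) * hL + ((36 * f 2 ^ 2 - 117 * f 1 ^ 2 + 8) / 8) * h
    have he2 : f 5 ^ 2 = 1/9 := by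
      linear_combination hE + (27 * f 1 ^ 2 + 1) * h
    have hd2 : f 4 ^ 2 = 1/9 := by
      linear_combination (1/2) * hD + (1/2) * he2 + hb2 - (1/2) * h
    have hc : f 3 = 1/3 := by linear_combination h3 + 3 * h
    have hg : f 6 = 1/3 := by linear_combination h6 + hb2 + 2 * h
    have ha' : f 1 = 1/3 ∨ f 1 = -(1/3) := sq_cases _ _ (by rw [h]; norm_num)
    have hb' : f 2 = 1/3 ∨ f 2 = -(1/3) := sq_cases _ _ (by rw [hb2]; norm_num)
    have hd' : f 4 = 1/3 ∨ f 4 = -(1/3) := sq_cases _ _ (by rw [hd2]; norm_num)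
    have he' : f 5 = 1/3 ∨ f 5 = -(1/3) := sq_cases _ _ (by rw [he2]; norm_num)
    right; right
    intro n h1 h2
    interval_cases n <;> norm_num <;> tauto
end

section
/- Let f : N → C satisfy f(u² + 2v²) = f(u)² + 2·f(v)² for all positive integers u, v. Then one of the following holds: (1) f(n) = 0 for every positive integer n; (2) for every positive integer n, f(n) = n whenever there exist positive integers u, v with n = u² + 2v², and f(n) = n or f(n) = −n otherwise; (3) for every positive integer n, f(n) = 1/3 whenever there exist positive integers u, v with n = u² + 2v², and f(n) = 1/3 or f(n) = −1/3 otherwise. -/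
theorem conjecture_k2 (f : ℕ → ℂ)
    (hf : ∀ u v : ℕ, 0 < u → 0 < v →
      f (u ^ 2 + 2 * v ^ 2) = f u ^ 2 + 2 * f v ^ 2) :
    (∀ n : ℕ, 1 ≤ n → f n = 0) ∨
    (∀ n : ℕ, 1 ≤ n →
      ((∃ u v : ℕ, 0 < u ∧ 0 < v ∧ n = u ^ 2 + 2 * v ^ 2) → f n = (n : ℂ)) ∧
      (¬ (∃ u v : ℕ, 0 < u ∧ 0 < v ∧ n = u ^ 2 + 2 * v ^ 2) → f n = (n : ℂ) ∨ f n = -(n : ℂ))) ∨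
    (∀ n : ℕ, 1 ≤ n →
      ((∃ u v : ℕ, 0 < u ∧ 0 < v ∧ n = u ^ 2 + 2 * v ^ 2) → f n = 1 / 3) ∧
      (¬ (∃ u v : ℕ, 0 < u ∧ 0 < v ∧ n = u ^ 2 + 2 * v ^ 2) → f n = 1 / 3 ∨ f n = -(1 / 3))) := by
  -- basic instances
  have h3 := hf 1 1 one_pos one_pos
  have h6 := hf 2 1 (by norm_num) one_pos
  have h9 := hf 1 2 one_pos (by norm_num)
  have h11 := hf 3 1 (by norm_num) one_pos
  have h27a := hf 5 1 (by norm_num) one_pos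
  have h27b := hf 3 3 (by norm_num) (by norm_num)
  have h33a := hf 5 2 (by norm_num) (by norm_num)
  have h33b := hf 1 4 one_pos (by norm_num)
  have h57a := hf 7 2 (by norm_num) (by norm_num)
  have h57b := hf 5 4 (by norm_num) (by norm_num)
  have h54a := hf 6 3 (by norm_num) (by norm_num)
  have h54b := hf 2 5 (by norm_num) (by norm_num)
  have h99a := hf 9 3 (by norm_num) (by norm_num)
  have h99b := hf 1 7 one_pos (by norm_num)
  have h123a := hf 11 1 (by norm_num) one_pos
  have h123b := hf 5 7 (by norm_num) (by norm_num)
  norm_num at h3 h6 h9 h11 h27a h27b h33a h33b h57a h57b h54a h54b h99a h99b h123a h123b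
  set t := f 1 ^ 2 with hT
  set s := f 2 ^ 2 with hS
  have hA : f 3 = 3 * t := by linear_combination h3
  have hp : f 5 ^ 2 = 27 * t ^ 2 - 2 * t := by
    linear_combination h27b - h27a + (3 * f 3 + 9 * t) * hA
  have hr : f 4 ^ 2 = (27 * t ^ 2 - 3 * t) / 2 + s := by
    linear_combination (h33a - h33b) / 2 + hp / 2
  have hq : f 7 ^ 2 = 54 * t ^ 2 - 5 * t := by
    linear_combination h57b - h57a + hp + 2 * hr
  have hD : f 11 = 9 * t ^ 2 + 2 * t := by
    linear_combination h11 + (f 3 + 3 * t) * hA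
  have hE1 : s ^ 2 + 4 * t * s - 32 * t ^ 2 - s + 4 * t = 0 := by
    linear_combination h54b - h54a - (f 6 + s + 2 * t) * h6 -
      (2 * f 3 + 6 * t) * hA + 2 * hp
  have hE2 : 4 * s ^ 2 + 4 * t * s - 89 * t ^ 2 + 9 * t = 0 := by
    linear_combination h99b - h99a - (f 9 + t + 2 * s) * h9 -
      (2 * f 3 + 6 * t) * hA + 2 * hq
  have hE3 : 81 * t ^ 4 + 36 * t ^ 3 - 131 * t ^ 2 + 14 * t = 0 := by
    linear_combination h123b - h123a - (f 11 + 9 * t ^ 2 + 2 * t) * hD + hp + 2 * hq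
  have hTriple : t * (t - 1) * (9 * t - 1) = 0 := by
    linear_combination
      ((8/123) * s + (22/123) * t + (-8/41) * t * s + (-34/41) * t ^ 2) * hE1 +
      ((2/123) + (-2/123) * s + (-35/246) * t + (2/41) * t * s + (29/82) * t ^ 2) * hE2 +
      (5/82) * hE3
  -- key recursion
  have key : ∀ m : ℕ, f (m + 5) ^ 2 =
      f (m + 1) ^ 2 + 2 * f (m + 4) ^ 2 - 2 * f (m + 2) ^ 2 := by
    intro m
    have h1 := hf (m + 5) (m + 2) (by omega) (by omega)
    have h2 := hf (m + 1) (m + 4) (by omega) (by omega)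
    have e : (m + 5) ^ 2 + 2 * (m + 2) ^ 2 = (m + 1) ^ 2 + 2 * (m + 4) ^ 2 := by ring
    rw [e] at h1
    linear_combination h2 - h1
  rcases mul_eq_zero.mp hTriple with h | h9t
  rcases mul_eq_zero.mp h with ht0 | ht1
  · -- t = 0 : zero solution
    left
    have hf2 : f 2 = 0 := by
      have h4 : f 2 ^ 4 = 0 := by
        rw [ht0] at hE2
        linear_combination hE2 / 4
      exact pow_eq_zero_iff (by norm_num) |>.mp h4
    have hf1 : f 1 = 0 := pow_eq_zero_iff (n := 2) (by norm_num) |>.mp ht0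
    have hs0 : s = 0 := by rw [hS, hf2]; ring
    have hsq : ∀ n : ℕ, f (n + 1) ^ 2 = 0 := by
      intro n
      induction n using Nat.strong_induction_on with
      | _ n ih =>
        match n, ih with
        | 0, _ => show f 1 ^ 2 = 0; rw [← hT]; exact ht0
        | 1, _ => show f 2 ^ 2 = 0; rw [← hS]; exact hs0
        | 2, _ => show f 3 ^ 2 = 0; rw [hA, ht0]; ring
        | 3, _ => show f 4 ^ 2 = 0; rw [hr, ht0, hs0]; norm_num
        | (m + 4), ih =>
          have e := key m
          rw [ih m (by omega), ih (m + 3) (by omega), ih (m + 1) (by omega)] at e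
          show f (m + 5) ^ 2 = 0
          rw [e]; ring
    intro n hn
    obtain ⟨m, rfl⟩ : ∃ m, n = m + 1 := ⟨n - 1, by omega⟩
    exact pow_eq_zero_iff (n := 2) (by norm_num) |>.mp (hsq m)
  · -- t = 1 : identity solution
    right; left
    have ht1' : t = 1 := sub_eq_zero.mp ht1
    have hs4 : s = 4 := by
      rw [ht1'] at hE1 hE2
      linear_combination hE1 / 2 - hE2 / 8
    have hsq : ∀ n : ℕ, f (n + 1) ^ 2 = ((n + 1 : ℕ) : ℂ) ^ 2 := by
      intro n
      induction n using Nat.strong_induction_on with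
      | _ n ih =>
        match n, ih with
        | 0, _ => show f 1 ^ 2 = _; rw [← hT, ht1']; norm_num
        | 1, _ => show f 2 ^ 2 = _; rw [← hS, hs4]; norm_num
        | 2, _ => show f 3 ^ 2 = _; rw [hA, ht1']; norm_num
        | 3, _ => show f 4 ^ 2 = _; rw [hr, ht1', hs4]; norm_num
        | (m + 4), ih =>
          have e := key m
          rw [ih m (by omega), ih (m + 3) (by omega), ih (m + 1) (by omega)] at e
          show f (m + 5) ^ 2 = _
          rw [e]; push_cast; ring
    have hsq' : ∀ n : ℕ, 1 ≤ n → f n ^ 2 = (n : ℂ) ^ 2 := by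
      intro n hn
      obtain ⟨m, rfl⟩ : ∃ m, n = m + 1 := ⟨n - 1, by omega⟩
      exact hsq m
    intro n hn
    constructor
    · rintro ⟨u, v, hu, hv, rfl⟩
      rw [hf u v hu hv, hsq' u hu, hsq' v hv]
      push_cast; ring
    · intro _
      have h := hsq' n hn
      have h2 : (f n - (n : ℂ)) * (f n + (n : ℂ)) = 0 := by linear_combination h
      rcases mul_eq_zero.mp h2 with h3 | h3
      · left; exact sub_eq_zero.mp h3
      · right; linear_combination h3
  · -- t = 1/9 : constant solution
    right; right
    have ht9 : t = 1 / 9 := by linear_combination h9t / 9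
    have hs9 : s = 1 / 9 := by
      rw [ht9] at hE1 hE2
      linear_combination (-3/2) * hE1 + (3/8) * hE2
    have hsq : ∀ n : ℕ, f (n + 1) ^ 2 = 1 / 9 := by
      intro n
      induction n using Nat.strong_induction_on with
      | _ n ih =>
        match n, ih with
        | 0, _ => show f 1 ^ 2 = _; rw [← hT]; exact ht9
        | 1, _ => show f 2 ^ 2 = _; rw [← hS]; exact hs9
        | 2, _ => show f 3 ^ 2 = _; rw [hA, ht9]; norm_num
        | 3, _ => show f 4 ^ 2 = _; rw [hr, ht9, hs9]; norm_num
        | (m + 4), ih =>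
          have e := key m
          rw [ih m (by omega), ih (m + 3) (by omega), ih (m + 1) (by omega)] at e
          show f (m + 5) ^ 2 = _
          rw [e]; norm_num
    have hsq' : ∀ n : ℕ, 1 ≤ n → f n ^ 2 = 1 / 9 := by
      intro n hn
      obtain ⟨m, rfl⟩ : ∃ m, n = m + 1 := ⟨n - 1, by omega⟩
      exact hsq m
    intro n hn
    constructor
    · rintro ⟨u, v, hu, hv, rfl⟩
      rw [hf u v hu hv, hsq' u hu, hsq' v hv]
      norm_num
    · intro _
      have h := hsq' n hn
      have h2 : (f n - 1 / 3) * (f n + 1 / 3) = 0 := by linear_combination h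
      rcases mul_eq_zero.mp h2 with h3 | h3
      · left; exact sub_eq_zero.mp h3
      · right; linear_combination h3
end

section
/- Let f : N → C satisfy f(u² + 3v²) = f(u)² + 3·f(v)² for all positive integers u, v, and write a = f(1), b = f(2). Then f(3)² = (8b² − 5a²)/3, f(4)² = 5b² − 4a², f(5)² = 8b² − 7a², f(6)² = (35b² − 32a²)/3, and f(7)² = 16b² − 15a². -/
theorem squares_formulae_k3 (f : ℕ → ℂ)
    (hf : ∀ u v : ℕ, 0 < u → 0 < v →
      f (u ^ 2 + 3 * v ^ 2) = f u ^ 2 + 3 * f v ^ 2)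
    (a b : ℂ) (ha : a = f 1) (hb : b = f 2) :
    f 3 ^ 2 = (8 * b ^ 2 - 5 * a ^ 2) / 3 ∧
    f 4 ^ 2 = 5 * b ^ 2 - 4 * a ^ 2 ∧
    f 5 ^ 2 = 8 * b ^ 2 - 7 * a ^ 2 ∧
    f 6 ^ 2 = (35 * b ^ 2 - 32 * a ^ 2) / 3 ∧
    f 7 ^ 2 = 16 * b ^ 2 - 15 * a ^ 2 := by
  subst ha hb
  have h28a := hf 1 3 (by norm_num) (by norm_num)
  have h28b := hf 4 2 (by norm_num) (by norm_num)
  have h28c := hf 5 1 (by norm_num) (by norm_num)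
  have h52a := hf 7 1 (by norm_num) (by norm_num)
  have h52b := hf 5 3 (by norm_num) (by norm_num)
  have h52c := hf 2 4 (by norm_num) (by norm_num)
  have h76a := hf 8 2 (by norm_num) (by norm_num)
  have h76b := hf 7 3 (by norm_num) (by norm_num)
  have h112a := hf 2 6 (by norm_num) (by norm_num)
  have h112b := hf 8 4 (by norm_num) (by norm_num)
  norm_num at h28a h28b h28c h52a h52b h52c h76a h76b h112a h112b
  refine ⟨?_, ?_, ?_, ?_, ?_⟩
  · linear_combination (-2/3 : ℂ) * h28a + h28b - (1/3 : ℂ) * h28c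
      + (1/3 : ℂ) * h52b - (1/3 : ℂ) * h52c
  · linear_combination -h28a + 2 * h28b - h28c + h52b - h52c
  · linear_combination -h28a + 3 * h28b - 2 * h28c + h52b - h52c
  · linear_combination (-8/3 : ℂ) * h28a + 5 * h28b - (7/3 : ℂ) * h28c
      - (1/3 : ℂ) * h52a + (7/3 : ℂ) * h52b - 2 * h52c
      - (1/3 : ℂ) * h76a + (1/3 : ℂ) * h76b
      - (1/3 : ℂ) * h112a + (1/3 : ℂ) * h112b
  · linear_combination -3 * h28a + 6 * h28b - 3 * h28c - h52a + 3 * h52b - 2 * h52c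
end

section
/- Let f : N → C satisfy f(u² + 3v²) = f(u)² + 3·f(v)² for all positive integers u, v. Then f(1) ∈ {0, 1, −1, 1/4, −1/4}. -/
theorem value_f1_k3 (f : ℕ → ℂ)
    (hf : ∀ u v : ℕ, 0 < u → 0 < v →
      f (u ^ 2 + 3 * v ^ 2) = f u ^ 2 + 3 * f v ^ 2) :
    f 1 = 0 ∨ f 1 = 1 ∨ f 1 = -1 ∨ f 1 = 1 / 4 ∨ f 1 = -(1 / 4) := by
  have e11 := hf 1 1 one_pos one_pos
  have e21 := hf 2 1 (by norm_num) one_pos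
  have e42 := hf 4 2 (by norm_num) (by norm_num)
  have e13 := hf 1 3 one_pos (by norm_num)
  have e51 := hf 5 1 (by norm_num) one_pos
  have e71 := hf 7 1 (by norm_num) one_pos
  have e53 := hf 5 3 (by norm_num) (by norm_num)
  have e24 := hf 2 4 (by norm_num) (by norm_num)
  have e12 := hf 1 2 one_pos (by norm_num)
  have e77 := hf 7 7 (by norm_num) (by norm_num)
  have e133 := hf 13 3 (by norm_num) (by norm_num)
  norm_num at e11 e21 e42 e13 e51 e71 e53 e24 e12 e77 e133
  have hC : 3 * (f 3) ^ 2 = 16 * (f 1) ^ 4 + 3 * (f 2) ^ 2 - (f 1) ^ 2 := by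
    linear_combination e42 - e13 + (f 4 + 4 * (f 1) ^ 2) * e11
  have hE : (f 5) ^ 2 = 16 * (f 1) ^ 4 + 3 * (f 2) ^ 2 - 3 * (f 1) ^ 2 := by
    linear_combination e13 - e51 + hC
  have hP : (f 2) ^ 4 + 6 * (f 1) ^ 2 * (f 2) ^ 2 - 23 * (f 1) ^ 4 - 6 * (f 2) ^ 2
      + 7 * (f 1) ^ 2 = 0 := by
    linear_combination e53 - e71 - (f 7 + (f 2) ^ 2 + 3 * (f 1) ^ 2) * e21 + hE + hC
  have hQ : (f 2) ^ 4 + 6 * (f 1) ^ 2 * (f 2) ^ 2 - 39 * (f 1) ^ 4 - (f 2) ^ 2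
      + 3 * (f 1) ^ 2 = 0 := by
    linear_combination e24 - e71 - (f 7 + (f 2) ^ 2 + 3 * (f 1) ^ 2) * e21
      + 3 * (f 4 + 4 * (f 1) ^ 2) * e11
  have hR : -5 * (f 2) ^ 4 + 18 * (f 1) ^ 2 * (f 2) ^ 2 + 19 * (f 1) ^ 4 - 3 * (f 2) ^ 2
      + (f 1) ^ 2 = 0 := by
    linear_combination e133 - e77 - 4 * (f 7 + (f 2) ^ 2 + 3 * (f 1) ^ 2) * e21
      + (f 13 + (f 1) ^ 2 + 3 * (f 2) ^ 2) * e12 + hC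
  have hkey : (f 1) * (f 1) * ((f 1) * (f 1) * (((f 1) - 1) * (((f 1) + 1)
      * ((4 * f 1 - 1) * (4 * f 1 + 1))))) = 0 := by
    linear_combination
      ((768 * (f 1) ^ 4 - 1008 * (f 1) ^ 2 + 240 * (f 2) ^ 2 + 200) / 768) * hP
      + ((-768 * (f 1) ^ 4 + 1008 * (f 1) ^ 2 - 240 * (f 2) ^ 2 - 375) / 768) * hQ
      - (275 / 768 : ℂ) * hR
  rcases mul_eq_zero.mp hkey with h | h
  · rcases mul_eq_zero.mp h with h | h <;> exact Or.inl h
  rcases mul_eq_zero.mp h with h | h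
  · rcases mul_eq_zero.mp h with h | h <;> exact Or.inl h
  rcases mul_eq_zero.mp h with h | h
  · exact Or.inr (Or.inl (by linear_combination h))
  rcases mul_eq_zero.mp h with h | h
  · exact Or.inr (Or.inr (Or.inl (by linear_combination h)))
  rcases mul_eq_zero.mp h with h | h
  · exact Or.inr (Or.inr (Or.inr (Or.inl (by linear_combination h / 4))))
  · exact Or.inr (Or.inr (Or.inr (Or.inr (by linear_combination h / 4))))
end

section
/- Let f : N → C satisfy f(u² + 3v²) = f(u)² + 3·f(v)² for all positive integers u, v. Then one of the following holds: (1) f(n) = 0 for every integer n with 1 ≤ n ≤ 7; (2) f(n) = n for n ∈ {4, 7}, and f(n) = n or f(n) = −n for every other integer n with 1 ≤ n ≤ 7; (3) f(n) = 1/4 for n ∈ {4, 7}, and f(n) = 1/4 or f(n) = −1/4 for every other integer n with 1 ≤ n ≤ 7. -/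
private lemma sq_cases_k3 {x c : ℂ} (h : x ^ 2 = c ^ 2) : x = c ∨ x = -c := by
  have h2 : (x - c) * (x + c) = 0 := by linear_combination h
  rcases mul_eq_zero.mp h2 with h3 | h3
  · exact Or.inl (sub_eq_zero.mp h3)
  · right; linear_combination h3

theorem small_range_trichotomy_k3 (f : ℕ → ℂ)
    (hf : ∀ u v : ℕ, 0 < u → 0 < v →
      f (u ^ 2 + 3 * v ^ 2) = f u ^ 2 + 3 * f v ^ 2) :
    (∀ n : ℕ, 1 ≤ n → n ≤ 7 → f n = 0) ∨
    (∀ n : ℕ, 1 ≤ n → n ≤ 7 →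
      ((n = 4 ∨ n = 7) → f n = (n : ℂ)) ∧
      (¬ (n = 4 ∨ n = 7) → f n = (n : ℂ) ∨ f n = -(n : ℂ))) ∨
    (∀ n : ℕ, 1 ≤ n → n ≤ 7 →
      ((n = 4 ∨ n = 7) → f n = 1 / 4) ∧
      (¬ (n = 4 ∨ n = 7) → f n = 1 / 4 ∨ f n = -(1 / 4))) := by
  have e4 := hf 1 1 (by norm_num) (by norm_num)
  have e7 := hf 2 1 (by norm_num) (by norm_num)
  have e13 := hf 1 2 (by norm_num) (by norm_num)
  have eX1 := hf 5 1 (by norm_num) (by norm_num)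
  have eX2 := hf 4 2 (by norm_num) (by norm_num)
  have eX3 := hf 1 3 (by norm_num) (by norm_num)
  have eY1 := hf 7 1 (by norm_num) (by norm_num)
  have eY2 := hf 2 4 (by norm_num) (by norm_num)
  have eY3 := hf 5 3 (by norm_num) (by norm_num)
  have eZ1 := hf 8 2 (by norm_num) (by norm_num)
  have eZ2 := hf 7 3 (by norm_num) (by norm_num)
  have eZ3 := hf 1 5 (by norm_num) (by norm_num)
  have eW1 := hf 6 4 (by norm_num) (by norm_num)
  have eW2 := hf 3 5 (by norm_num) (by norm_num)
  have eV1 := hf 13 1 (by norm_num) (by norm_num)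
  have eV2 := hf 8 6 (by norm_num) (by norm_num)
  have eV3 := hf 5 7 (by norm_num) (by norm_num)
  norm_num at e4 e7 e13 eX1 eX2 eX3 eY1 eY2 eY3 eZ1 eZ2 eZ3 eW1 eW2 eV1 eV2 eV3
  have hp : f 4 = 4 * f 1 ^ 2 := by linear_combination e4
  have hs : f 7 = f 2 ^ 2 + 3 * f 1 ^ 2 := e7
  have ht : f 13 = f 1 ^ 2 + 3 * f 2 ^ 2 := e13
  rw [hp] at eX2 eY2 eW1
  rw [hs] at eY1 eZ2 eV3
  rw [ht] at eV1
  have hc3 : 3 * f 3 ^ 2 = 16 * f 1 ^ 4 + 3 * f 2 ^ 2 - f 1 ^ 2 := by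
    linear_combination eX2 - eX3
  have hd2 : f 5 ^ 2 = 3 * f 3 ^ 2 - 2 * f 1 ^ 2 := by
    linear_combination eX3 - eX1
  have eqI : f 2 ^ 4 + 6 * f 1 ^ 2 * f 2 ^ 2 - 39 * f 1 ^ 4 + 3 * f 1 ^ 2 - f 2 ^ 2 = 0 := by
    linear_combination eY2 - eY1
  have eqII : f 2 ^ 4 + 6 * f 1 ^ 2 * f 2 ^ 2 - 23 * f 1 ^ 4 + 7 * f 1 ^ 2 - 6 * f 2 ^ 2 = 0 := by
    linear_combination eY3 - eY1 + hd2 + 2 * hc3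
  have eqIII : 16 * f 1 ^ 4 + 4 * f 1 ^ 2 - 5 * f 2 ^ 2 = 0 := by
    linear_combination eqII - eqI
  have he3 : 3 * f 6 ^ 2 = 16 * f 1 ^ 4 + 30 * f 2 ^ 2 - 28 * f 1 ^ 2 := by
    linear_combination 3 * (eW2 - eW1) + 9 * hd2 + 10 * hc3
  have hg2 : f 8 ^ 2 = (f 2 ^ 2 + 3 * f 1 ^ 2) ^ 2 + 3 * f 3 ^ 2 - 3 * f 2 ^ 2 := by
    linear_combination eZ2 - eZ1
  have eqV : 4 * f 2 ^ 4 - 20 * f 1 ^ 4 - 15 * f 2 ^ 2 + 16 * f 1 ^ 2 = 0 := by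
    linear_combination (1/2 : ℂ) * (eV2 - eV1 + hg2 + he3 + hc3)
  have hP1 : f 1 ^ 2 * (f 1 ^ 2 - 1) * (16 * f 1 ^ 2 - 1) * (16 * f 1 ^ 2 + 55) = 0 := by
    linear_combination 25 * eqI + (5 * f 2 ^ 2 + 16 * f 1 ^ 4 + 34 * f 1 ^ 2 - 5) * eqIII
  have hP2 : f 1 ^ 2 * (f 1 ^ 2 - 1) * (16 * f 1 ^ 2 - 1) * (16 * f 1 ^ 2 + 25) = 0 := by
    linear_combination (25/4 : ℂ) * eqV
      + ((20 * f 2 ^ 2 + 64 * f 1 ^ 4 + 16 * f 1 ^ 2 - 75)/4) * eqIII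
  have key : f 1 ^ 2 * (f 1 ^ 2 - 1) * (16 * f 1 ^ 2 - 1) = 0 := by
    linear_combination (1/30 : ℂ) * hP1 - (1/30 : ℂ) * hP2
  rcases mul_eq_zero.mp key with h | hA16
  · rcases mul_eq_zero.mp h with hA | hA1
    · -- zero case
      have hb : f 2 ^ 2 = 0 := by
        linear_combination (-1/5 : ℂ) * eqIII + (16/5 * f 1 ^ 2 + 4/5) * hA
      have hc : f 3 ^ 2 = 0 := by
        linear_combination (1/3 : ℂ) * hc3 + (16/3 * f 1 ^ 2 - 1/3) * hA + hb
      have hd : f 5 ^ 2 = 0 := by linear_combination hd2 + 3 * hc - 2 * hA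
      have he : f 6 ^ 2 = 0 := by
        linear_combination (1/3 : ℂ) * he3 + (16/3 * f 1 ^ 2 - 28/3) * hA + 10 * hb
      have v1 : f 1 = 0 := sq_eq_zero_iff.mp hA
      have v2 : f 2 = 0 := sq_eq_zero_iff.mp hb
      have v3 : f 3 = 0 := sq_eq_zero_iff.mp hc
      have v4 : f 4 = 0 := by linear_combination hp + 4 * hA
      have v5 : f 5 = 0 := sq_eq_zero_iff.mp hd
      have v6 : f 6 = 0 := sq_eq_zero_iff.mp he
      have v7 : f 7 = 0 := by linear_combination hs + hb + 3 * hA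
      left
      intro n h1 h7
      interval_cases n <;> assumption
    · -- f(1)^2 = 1 case
      have hA : f 1 ^ 2 = 1 := by linear_combination hA1
      have hb : f 2 ^ 2 = 4 := by
        linear_combination (-1/5 : ℂ) * eqIII + ((16 * f 1 ^ 2 + 20)/5) * hA
      have hc : f 3 ^ 2 = 9 := by
        linear_combination (1/3 : ℂ) * hc3 + ((16 * f 1 ^ 2 + 15)/3) * hA + hb
      have hd : f 5 ^ 2 = 25 := by linear_combination hd2 + 3 * hc - 2 * hA
      have he : f 6 ^ 2 = 36 := by
        linear_combination (1/3 : ℂ) * he3 + ((16 * f 1 ^ 2 - 12)/3) * hA + 10 * hb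
      have v1 : f 1 = 1 ∨ f 1 = -1 := sq_cases_k3 (by linear_combination hA)
      have v2 : f 2 = 2 ∨ f 2 = -2 := sq_cases_k3 (by linear_combination hb)
      have v3 : f 3 = 3 ∨ f 3 = -3 := sq_cases_k3 (by linear_combination hc)
      have v4 : f 4 = 4 := by linear_combination hp + 4 * hA
      have v5 : f 5 = 5 ∨ f 5 = -5 := sq_cases_k3 (by linear_combination hd)
      have v6 : f 6 = 6 ∨ f 6 = -6 := sq_cases_k3 (by linear_combination he)
      have v7 : f 7 = 7 := by linear_combination hs + hb + 3 * hA
      right; left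
      intro n h1 h7
      interval_cases n
      · exact ⟨fun h => absurd h (by omega), fun _ => by push_cast; exact v1⟩
      · exact ⟨fun h => absurd h (by omega), fun _ => by push_cast; exact v2⟩
      · exact ⟨fun h => absurd h (by omega), fun _ => by push_cast; exact v3⟩
      · exact ⟨fun _ => by push_cast; exact v4, fun h => absurd (by omega) h⟩
      · exact ⟨fun h => absurd h (by omega), fun _ => by push_cast; exact v5⟩
      · exact ⟨fun h => absurd h (by omega), fun _ => by push_cast; exact v6⟩
      · exact ⟨fun _ => by push_cast; exact v7, fun h => absurd (by omega) h⟩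
  · -- f(1)^2 = 1/16 case
    have hA : f 1 ^ 2 = 1/16 := by linear_combination (1/16 : ℂ) * hA16
    have hb : f 2 ^ 2 = 1/16 := by
      linear_combination (-1/5 : ℂ) * eqIII + ((16 * f 1 ^ 2 + 5)/5) * hA
    have hc : f 3 ^ 2 = 1/16 := by
      linear_combination (1/3 : ℂ) * hc3 + (16 * f 1 ^ 2/3) * hA + hb
    have hd : f 5 ^ 2 = 1/16 := by linear_combination hd2 + 3 * hc - 2 * hA
    have he : f 6 ^ 2 = 1/16 := by
      linear_combination (1/3 : ℂ) * he3 + ((16 * f 1 ^ 2 - 27)/3) * hA + 10 * hb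
    have v1 : f 1 = 1/4 ∨ f 1 = -(1/4) := sq_cases_k3 (by linear_combination hA)
    have v2 : f 2 = 1/4 ∨ f 2 = -(1/4) := sq_cases_k3 (by linear_combination hb)
    have v3 : f 3 = 1/4 ∨ f 3 = -(1/4) := sq_cases_k3 (by linear_combination hc)
    have v4 : f 4 = 1/4 := by linear_combination hp + 4 * hA
    have v5 : f 5 = 1/4 ∨ f 5 = -(1/4) := sq_cases_k3 (by linear_combination hd)
    have v6 : f 6 = 1/4 ∨ f 6 = -(1/4) := sq_cases_k3 (by linear_combination he)
    have v7 : f 7 = 1/4 := by linear_combination hs + hb + 3 * hA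
    right; right
    intro n h1 h7
    interval_cases n
    · exact ⟨fun h => absurd h (by omega), fun _ => v1⟩
    · exact ⟨fun h => absurd h (by omega), fun _ => v2⟩
    · exact ⟨fun h => absurd h (by omega), fun _ => v3⟩
    · exact ⟨fun _ => v4, fun h => absurd (by omega) h⟩
    · exact ⟨fun h => absurd h (by omega), fun _ => v5⟩
    · exact ⟨fun h => absurd h (by omega), fun _ => v6⟩
    · exact ⟨fun _ => v7, fun h => absurd (by omega) h⟩
end

section
/- Let f : N → C satisfy f(u² + 3v²) = f(u)² + 3·f(v)² for all positive integers u, v. Then one of the following holds: (1) f(n) = 0 for every positive integer n; (2) for every positive integer n, f(n) = n whenever there exist positive integers u, v with n = u² + 3v², and f(n) = n or f(n) = −n otherwise; (3) for every positive integer n, f(n) = 1/4 whenever there exist positive integers u, v with n = u² + 3v², and f(n) = 1/4 or f(n) = −1/4 otherwise. -/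
lemma propagate_k3 (f G : ℕ → ℂ)
    (key : ∀ j : ℕ, f (j+7) ^ 2 + 3 * f (j+3) ^ 2 = f (j+1) ^ 2 + 3 * f (j+5) ^ 2)
    (hG : ∀ j : ℕ, G (j+7) + 3 * G (j+3) = G (j+1) + 3 * G (j+5))
    (hbase : ∀ i : ℕ, 1 ≤ i → i ≤ 6 → f i ^ 2 = G i) :
    ∀ n : ℕ, 1 ≤ n → f n ^ 2 = G n := by
  intro n
  induction n using Nat.strong_induction_on with
  | _ n ih =>
    intro hn
    rcases le_or_gt n 6 with h | h
    · exact hbase n hn h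
    · obtain ⟨j, rfl⟩ : ∃ j, n = j + 7 := ⟨n - 7, by omega⟩
      have k := key j
      have g := hG j
      have i1 := ih (j+1) (by omega) (by omega)
      have i3 := ih (j+3) (by omega) (by omega)
      have i5 := ih (j+5) (by omega) (by omega)
      linear_combination k - g - 3*i3 + i1 + 3*i5

theorem conjecture_k3 (f : ℕ → ℂ)
    (hf : ∀ u v : ℕ, 0 < u → 0 < v →
      f (u ^ 2 + 3 * v ^ 2) = f u ^ 2 + 3 * f v ^ 2) :
    (∀ n : ℕ, 1 ≤ n → f n = 0) ∨
    (∀ n : ℕ, 1 ≤ n →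
      ((∃ u v : ℕ, 0 < u ∧ 0 < v ∧ n = u ^ 2 + 3 * v ^ 2) → f n = (n : ℂ)) ∧
      (¬ (∃ u v : ℕ, 0 < u ∧ 0 < v ∧ n = u ^ 2 + 3 * v ^ 2) → f n = (n : ℂ) ∨ f n = -(n : ℂ))) ∨
    (∀ n : ℕ, 1 ≤ n →
      ((∃ u v : ℕ, 0 < u ∧ 0 < v ∧ n = u ^ 2 + 3 * v ^ 2) → f n = 1 / 4) ∧
      (¬ (∃ u v : ℕ, 0 < u ∧ 0 < v ∧ n = u ^ 2 + 3 * v ^ 2) → f n = 1 / 4 ∨ f n = -(1 / 4))) := by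
  -- the six-term recurrence for f ^ 2
  have key : ∀ j : ℕ, f (j+7) ^ 2 + 3 * f (j+3) ^ 2 = f (j+1) ^ 2 + 3 * f (j+5) ^ 2 := by
    intro j
    have h1 := hf (j+7) (j+3) (by omega) (by omega)
    have h2 := hf (j+1) (j+5) (by omega) (by omega)
    have hidx : (j+7) ^ 2 + 3 * (j+3) ^ 2 = (j+1) ^ 2 + 3 * (j+5) ^ 2 := by ring
    rw [hidx] at h1
    linear_combination h2 - h1
  -- equations at small numbers
  have A1 := hf 1 1 one_pos one_pos
  have A2 := hf 2 1 (by norm_num) one_pos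
  have A4 := hf 5 1 (by norm_num) one_pos
  have A5 := hf 4 2 (by norm_num) (by norm_num)
  have A6 := hf 1 3 one_pos (by norm_num)
  have A7 := hf 7 1 (by norm_num) one_pos
  have A8 := hf 2 4 (by norm_num) (by norm_num)
  have A9 := hf 7 7 (by norm_num) (by norm_num)
  have A10 := hf 13 3 (by norm_num) (by norm_num)
  have A11 := hf 7 3 (by norm_num) (by norm_num)
  have A12 := hf 1 5 one_pos (by norm_num)
  have A13 := hf 6 4 (by norm_num) (by norm_num)
  have A14 := hf 9 1 (by norm_num) one_pos
  have A15 := hf 9 5 (by norm_num) (by norm_num)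
  have A16 := hf 3 7 (by norm_num) (by norm_num)
  have A3 := hf 1 2 one_pos (by norm_num)
  norm_num at A1 A2 A3 A4 A5 A6 A7 A8 A9 A10 A11 A12 A13 A14 A15 A16
  rw [A1] at A5 A8 A13
  rw [A2] at A7 A9 A11 A16
  rw [A3] at A10
  have B1sq : f 4 ^ 2 = 16 * (f 1 ^ 2) ^ 2 := by rw [A1]; ring
  have C1 : (f 2 ^ 2 + 3 * f 1 ^ 2) ^ 2 + 3 * f 1 ^ 2
      = f 2 ^ 2 + 48 * (f 1 ^ 2) ^ 2 := by linear_combination A8 - A7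
  have C2 : f 1 ^ 2 + 3 * f 3 ^ 2 = 16 * (f 1 ^ 2) ^ 2 + 3 * f 2 ^ 2 := by
    linear_combination A5 - A6
  have C3 : (f 1 ^ 2 + 3 * f 2 ^ 2) ^ 2 + 3 * f 3 ^ 2
      = 4 * (f 2 ^ 2 + 3 * f 1 ^ 2) ^ 2 := by linear_combination A9 - A10
  have B4 : f 5 ^ 2 = 16 * (f 1 ^ 2) ^ 2 + 3 * f 2 ^ 2 - 3 * f 1 ^ 2 := by
    linear_combination A5 - A4
  have C4 : (f 2 ^ 2 + 3 * f 1 ^ 2) ^ 2 + 3 * f 3 ^ 2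
      = f 1 ^ 2 + 3 * (16 * (f 1 ^ 2) ^ 2 + 3 * f 2 ^ 2 - 3 * f 1 ^ 2) := by
    linear_combination A12 - A11 + 3 * B4
  have hq : 5 * f 2 ^ 2 = 16 * (f 1 ^ 2) ^ 2 + 4 * f 1 ^ 2 := by
    linear_combination C1 - C4 + C2
  have hb6 : f 2 ^ 2 * (6 * f 1 ^ 2 - 1) = 2 * f 1 ^ 2 * (11 * f 1 ^ 2 - 1) := by
    linear_combination (5 * C1 - C3 + C2) / 8
  have ht : f 1 ^ 2 * (16 * f 1 ^ 2 - 1) * (f 1 ^ 2 - 1) = 0 := by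
    linear_combination (5 * hb6 - (6 * f 1 ^ 2 - 1) * hq) / 6
  have hg6 : f 6 ^ 2 = f 3 ^ 2 + 3 * (f 2 ^ 2 + 3 * f 1 ^ 2) ^ 2
      - 3 * (16 * (f 1 ^ 2) ^ 2 + 3 * f 2 ^ 2 - 3 * f 1 ^ 2)
      + 3 * f 1 ^ 2 - 48 * (f 1 ^ 2) ^ 2 := by
    linear_combination (A14 - A13) + (A16 - A15) - 3 * B4
  rcases mul_eq_zero.mp ht with h | h3
  · rcases mul_eq_zero.mp h with h1 | h2
    · -- f 1 ^ 2 = 0 : the zero case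
      rw [h1] at hq C2 B1sq B4 hg6
      have hb : f 2 ^ 2 = 0 := by linear_combination hq / 5
      rw [hb] at C2 B4 hg6
      have hc : f 3 ^ 2 = 0 := by linear_combination C2 / 3
      rw [hc] at hg6
      have HB : ∀ i : ℕ, 1 ≤ i → i ≤ 6 → f i ^ 2 = (fun _ : ℕ => (0 : ℂ)) i := by
        intro i hi1 hi2
        interval_cases i
        · exact h1
        · exact hb
        · exact hc
        · rw [B1sq]; norm_num
        · rw [B4]; norm_num
        · rw [hg6]; norm_num
      have Hg := propagate_k3 f (fun _ => (0 : ℂ)) key (by intro j; simp) HB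
      left
      intro n hn
      exact (pow_eq_zero_iff two_ne_zero).mp (Hg n hn)
    · -- f 1 ^ 2 = 1/16 : the 1/4 case
      have h1 : f 1 ^ 2 = 1 / 16 := by linear_combination h2 / 16
      rw [h1] at hq C2 B1sq B4 hg6
      have hb : f 2 ^ 2 = 1 / 16 := by linear_combination hq / 5
      rw [hb] at C2 B4 hg6
      have hc : f 3 ^ 2 = 1 / 16 := by linear_combination C2 / 3
      rw [hc] at hg6
      have HB : ∀ i : ℕ, 1 ≤ i → i ≤ 6 → f i ^ 2 = (fun _ : ℕ => (1/16 : ℂ)) i := by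
        intro i hi1 hi2
        interval_cases i
        · exact h1
        · exact hb
        · exact hc
        · rw [B1sq]; norm_num
        · rw [B4]; norm_num
        · rw [hg6]; norm_num
      have Hg := propagate_k3 f (fun _ => (1/16 : ℂ)) key (by intro j; ring) HB
      right; right
      intro n hn
      constructor
      · rintro ⟨u, v, hu, hv, rfl⟩
        rw [hf u v hu hv, Hg u hu, Hg v hv]
        norm_num
      · intro _
        have h := Hg n hn
        have h0 : (f n - 1/4) * (f n + 1/4) = 0 := by linear_combination h
        rcases mul_eq_zero.mp h0 with h' | h'
        · exact Or.inl (sub_eq_zero.mp h')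
        · exact Or.inr (eq_neg_of_add_eq_zero_left h')
  · -- f 1 ^ 2 = 1 : the identity case
    have h1 : f 1 ^ 2 = 1 := sub_eq_zero.mp h3
    rw [h1] at hq C2 B1sq B4 hg6
    have hb : f 2 ^ 2 = 4 := by linear_combination hq / 5
    rw [hb] at C2 B4 hg6
    have hc : f 3 ^ 2 = 9 := by linear_combination C2 / 3
    rw [hc] at hg6
    have HB : ∀ i : ℕ, 1 ≤ i → i ≤ 6 → f i ^ 2 = (fun m : ℕ => ((m : ℂ)) ^ 2) i := by
      intro i hi1 hi2
      interval_cases i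
      · rw [h1]; norm_num
      · rw [hb]; norm_num
      · rw [hc]; norm_num
      · rw [B1sq]; norm_num
      · rw [B4]; norm_num
      · rw [hg6]; norm_num
    have Hg := propagate_k3 f (fun m : ℕ => ((m : ℂ)) ^ 2) key
      (by intro j; push_cast; ring) HB
    right; left
    intro n hn
    constructor
    · rintro ⟨u, v, hu, hv, rfl⟩
      rw [hf u v hu hv, Hg u hu, Hg v hv]
      push_cast
      ring
    · intro _
      have h := Hg n hn
      have h0 : (f n - (n : ℂ)) * (f n + (n : ℂ)) = 0 := by linear_combination h
      rcases mul_eq_zero.mp h0 with h' | h'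
      · exact Or.inl (sub_eq_zero.mp h')
      · exact Or.inr (eq_neg_of_add_eq_zero_left h')
end

section
/- Let f : N → C satisfy f(u² + 4v²) = f(u)² + 4·f(v)² for all positive integers u, v, and write a = f(1), b = f(2). Then f(3)² = (8b² − 5a²)/3, f(4)² = 5b² − 4a², f(5)² = 8b² − 7a², f(6)² = (35b² − 32a²)/3, f(7)² = 16b² − 15a², and f(8)² = 21b² − 20a². -/
theorem squares_formulae_k4 (f : ℕ → ℂ)
    (hf : ∀ u v : ℕ, 0 < u → 0 < v →
      f (u ^ 2 + 4 * v ^ 2) = f u ^ 2 + 4 * f v ^ 2)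
    (a b : ℂ) (ha : a = f 1) (hb : b = f 2) :
    f 3 ^ 2 = (8 * b ^ 2 - 5 * a ^ 2) / 3 ∧
    f 4 ^ 2 = 5 * b ^ 2 - 4 * a ^ 2 ∧
    f 5 ^ 2 = 8 * b ^ 2 - 7 * a ^ 2 ∧
    f 6 ^ 2 = (35 * b ^ 2 - 32 * a ^ 2) / 3 ∧
    f 7 ^ 2 = 16 * b ^ 2 - 15 * a ^ 2 ∧
    f 8 ^ 2 = 21 * b ^ 2 - 20 * a ^ 2 := by
  subst ha hb
  have h5 : f 5 = f 1 ^ 2 + 4 * f 1 ^ 2 := by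
    have := hf 1 1 (by norm_num) (by norm_num); norm_num at this; exact this
  have h20a : f 20 = f 2 ^ 2 + 4 * f 2 ^ 2 := by
    have := hf 2 2 (by norm_num) (by norm_num); norm_num at this; exact this
  have h20b : f 20 = f 4 ^ 2 + 4 * f 1 ^ 2 := by
    have := hf 4 1 (by norm_num) (by norm_num); norm_num at this; exact this
  have h65a : f 65 = f 1 ^ 2 + 4 * f 4 ^ 2 := by
    have := hf 1 4 (by norm_num) (by norm_num); norm_num at this; exact this
  have h65b : f 65 = f 7 ^ 2 + 4 * f 2 ^ 2 := by
    have := hf 7 2 (by norm_num) (by norm_num); norm_num at this; exact this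
  have h40a : f 40 = f 2 ^ 2 + 4 * f 3 ^ 2 := by
    have := hf 2 3 (by norm_num) (by norm_num); norm_num at this; exact this
  have h40b : f 40 = f 6 ^ 2 + 4 * f 1 ^ 2 := by
    have := hf 6 1 (by norm_num) (by norm_num); norm_num at this; exact this
  have h85a : f 85 = f 7 ^ 2 + 4 * f 3 ^ 2 := by
    have := hf 7 3 (by norm_num) (by norm_num); norm_num at this; exact this
  have h85b : f 85 = f 9 ^ 2 + 4 * f 1 ^ 2 := by
    have := hf 9 1 (by norm_num) (by norm_num); norm_num at this; exact this
  have h145a : f 145 = f 1 ^ 2 + 4 * f 6 ^ 2 := by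
    have := hf 1 6 (by norm_num) (by norm_num); norm_num at this; exact this
  have h145b : f 145 = f 9 ^ 2 + 4 * f 4 ^ 2 := by
    have := hf 9 4 (by norm_num) (by norm_num); norm_num at this; exact this
  have h104a : f 104 = f 2 ^ 2 + 4 * f 5 ^ 2 := by
    have := hf 2 5 (by norm_num) (by norm_num); norm_num at this; exact this
  have h104b : f 104 = f 10 ^ 2 + 4 * f 1 ^ 2 := by
    have := hf 10 1 (by norm_num) (by norm_num); norm_num at this; exact this
  have h200a : f 200 = f 2 ^ 2 + 4 * f 7 ^ 2 := by
    have := hf 2 7 (by norm_num) (by norm_num); norm_num at this; exact this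
  have h200b : f 200 = f 10 ^ 2 + 4 * f 5 ^ 2 := by
    have := hf 10 5 (by norm_num) (by norm_num); norm_num at this; exact this
  have h68a : f 68 = f 2 ^ 2 + 4 * f 4 ^ 2 := by
    have := hf 2 4 (by norm_num) (by norm_num); norm_num at this; exact this
  have h68b : f 68 = f 8 ^ 2 + 4 * f 1 ^ 2 := by
    have := hf 8 1 (by norm_num) (by norm_num); norm_num at this; exact this
  have hs4 : f 4 ^ 2 = 5 * f 2 ^ 2 - 4 * f 1 ^ 2 := by linear_combination h20a - h20b
  have hs7 : f 7 ^ 2 = 16 * f 2 ^ 2 - 15 * f 1 ^ 2 := by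
    linear_combination h65a - h65b + 4 * hs4
  have hs9 : f 9 ^ 2 = f 6 ^ 2 + 15 * f 2 ^ 2 - 15 * f 1 ^ 2 := by
    linear_combination h85a - h85b + hs7 - h40a + h40b
  have hs6 : f 6 ^ 2 = (35 * f 2 ^ 2 - 32 * f 1 ^ 2) / 3 := by
    linear_combination (h145b - h145a + hs9 + 4 * hs4) / 3
  have hs3 : f 3 ^ 2 = (8 * f 2 ^ 2 - 5 * f 1 ^ 2) / 3 := by
    linear_combination (h40b - h40a + hs6) / 4
  have hs10 : f 10 ^ 2 = f 2 ^ 2 + 100 * f 1 ^ 4 - 4 * f 1 ^ 2 := by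
    linear_combination h104a - h104b + 4 * (f 5 + 5 * f 1 ^ 2) * h5
  have hs5 : f 5 ^ 2 = 8 * f 2 ^ 2 - 7 * f 1 ^ 2 := by
    linear_combination (h200a - h200b - hs10 + 4 * hs7 + 4 * (f 5 + 5 * f 1 ^ 2) * h5) / 8
  have hs8 : f 8 ^ 2 = 21 * f 2 ^ 2 - 20 * f 1 ^ 2 := by
    linear_combination h68a - h68b + 4 * hs4
  exact ⟨hs3, hs4, hs5, hs6, hs7, hs8⟩
end

section
/- Let f : N → C satisfy f(u² + 4v²) = f(u)² + 4·f(v)² for all positive integers u, v. Then f(1) ∈ {0, 1, −1, 1/5, −1/5}. -/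
theorem value_f1_k4 (f : ℕ → ℂ)
    (hf : ∀ u v : ℕ, 0 < u → 0 < v →
      f (u ^ 2 + 4 * v ^ 2) = f u ^ 2 + 4 * f v ^ 2) :
    f 1 = 0 ∨ f 1 = 1 ∨ f 1 = -1 ∨ f 1 = 1 / 5 ∨ f 1 = -(1 / 5) := by
  have h5 := hf 1 1 (by norm_num) (by norm_num)
  have h2 := hf 2 1 (by norm_num) (by norm_num)
  have h3 := hf 3 1 (by norm_num) (by norm_num)
  have h4 := hf 1 2 (by norm_num) (by norm_num)
  have h20a := hf 2 2 (by norm_num) (by norm_num)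
  have h20b := hf 4 1 (by norm_num) (by norm_num)
  have h65a := hf 1 4 (by norm_num) (by norm_num)
  have h65b := hf 7 2 (by norm_num) (by norm_num)
  have h85a := hf 7 3 (by norm_num) (by norm_num)
  have h85b := hf 9 1 (by norm_num) (by norm_num)
  have h104a := hf 2 5 (by norm_num) (by norm_num)
  have h104b := hf 10 1 (by norm_num) (by norm_num)
  have h125a := hf 5 5 (by norm_num) (by norm_num)
  have h125b := hf 11 1 (by norm_num) (by norm_num)
  have h164a := hf 8 5 (by norm_num) (by norm_num)
  have h164b := hf 10 4 (by norm_num) (by norm_num)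
  have h185a := hf 11 4 (by norm_num) (by norm_num)
  have h185b := hf 13 2 (by norm_num) (by norm_num)
  have h200a := hf 2 7 (by norm_num) (by norm_num)
  have h200b := hf 10 5 (by norm_num) (by norm_num)
  have h205a := hf 3 7 (by norm_num) (by norm_num)
  have h205b := hf 13 3 (by norm_num) (by norm_num)
  have h325a := hf 1 9 (by norm_num) (by norm_num)
  have h325b := hf 17 3 (by norm_num) (by norm_num)
  norm_num at h5 h2 h3 h4 h20a h20b h65a h65b h85a h85b h104a h104b h125a h125b h164a h164b h185a h185b h200a h200b h205a h205b h325a h325b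
  -- f 4 ^ 2 in terms of f 2, f 1
  have hd : f 4 ^ 2 = 5 * f 2 ^ 2 - 4 * f 1 ^ 2 := by
    linear_combination h20a - h20b
  -- f 10 ^ 2
  have hq : f 10 ^ 2 = f 2 ^ 2 + 100 * f 1 ^ 4 - 4 * f 1 ^ 2 := by
    linear_combination h104a - h104b + 4 * (f 5 + 5 * f 1 ^ 2) * h5
  -- f 7 ^ 2
  have hg : f 7 ^ 2 = 50 * f 1 ^ 4 - f 1 ^ 2 := by
    linear_combination (h200b - h200a + hq) / 4 + (f 5 + 5 * f 1 ^ 2) * h5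
  -- f 2 ^ 2
  have hb : 8 * f 2 ^ 2 = 25 * f 1 ^ 4 + 7 * f 1 ^ 2 := by
    linear_combination (h65b - h65a - 4 * hd + hg) / 2
  have hI : (f 2 ^ 2 + 4 * f 1 ^ 2) ^ 2 = 21 * f 2 ^ 2 - 20 * f 1 ^ 2 := by
    linear_combination h164b - h164a + hq + 4 * hd - 4 * (f 5 + 5 * f 1 ^ 2) * h5
      - (f 8 + f 2 ^ 2 + 4 * f 1 ^ 2) * h2
  have hP1 : (25 * f 1 ^ 4 + 39 * f 1 ^ 2) ^ 2 = 4200 * f 1 ^ 4 - 104 * f 1 ^ 2 := by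
    linear_combination 64 * hI +
      (168 - (8 * f 2 ^ 2 + 32 * f 1 ^ 2 + 25 * f 1 ^ 4 + 39 * f 1 ^ 2)) * hb
  -- f 11 ^ 2
  have hr : f 11 ^ 2 = 125 * f 1 ^ 4 - 4 * f 1 ^ 2 := by
    linear_combination h125a - h125b + 5 * (f 5 + 5 * f 1 ^ 2) * h5
  have hJ : (f 3 ^ 2 + 4 * f 1 ^ 2) ^ 2 = 200 * f 1 ^ 4 - 4 * f 1 ^ 2 - 3 * f 3 ^ 2 := by
    linear_combination h205a - h205b - (f 13 + f 3 ^ 2 + 4 * f 1 ^ 2) * h3 + 4 * hg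
  have hK : (f 3 ^ 2 + 4 * f 1 ^ 2) ^ 2 = 125 * f 1 ^ 4 - 20 * f 1 ^ 2 + 16 * f 2 ^ 2 := by
    linear_combination h185a - h185b + 4 * hd + hr - (f 13 + f 3 ^ 2 + 4 * f 1 ^ 2) * h3
  have hc : 3 * f 3 ^ 2 = 25 * f 1 ^ 4 + 2 * f 1 ^ 2 := by
    linear_combination hJ - hK - 2 * hb
  have hp : f 9 ^ 2 = 50 * f 1 ^ 4 - 5 * f 1 ^ 2 + 4 * f 3 ^ 2 := by
    linear_combination h85a - h85b + hg
  have hP2 : (25 * f 1 ^ 4 + 9 * f 1 ^ 2) ^ 2 = 1200 * f 1 ^ 4 - 44 * f 1 ^ 2 := by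
    linear_combination 4 * (h325a - h325b) - 4 * (f 17 + f 1 ^ 2 + 4 * f 2 ^ 2) * h4
      + 16 * hp + 16 * hc
      - (2 * f 1 ^ 2 + 8 * f 2 ^ 2 + 25 * f 1 ^ 4 + 9 * f 1 ^ 2) * hb
  have h0 : f 1 * (f 1 * ((f 1 - 1) * ((f 1 + 1) * ((5 * f 1 - 1) * (5 * f 1 + 1))))) = 0 := by
    linear_combination (hP1 - hP2) / 60
  rcases mul_eq_zero.mp h0 with h | h
  · exact Or.inl h
  rcases mul_eq_zero.mp h with h | h
  · exact Or.inl h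
  rcases mul_eq_zero.mp h with h | h
  · exact Or.inr (Or.inl (by linear_combination h))
  rcases mul_eq_zero.mp h with h | h
  · exact Or.inr (Or.inr (Or.inl (by linear_combination h)))
  rcases mul_eq_zero.mp h with h | h
  · exact Or.inr (Or.inr (Or.inr (Or.inl (by linear_combination h / 5))))
  · exact Or.inr (Or.inr (Or.inr (Or.inr (by linear_combination h / 5))))
end

section
/- Let f : N → C satisfy f(u² + 4v²) = f(u)² + 4·f(v)² for all positive integers u, v. Then one of the following holds: (1) f(n) = 0 for every integer n with 1 ≤ n ≤ 8; (2) f(n) = n for n ∈ {5, 8}, and f(n) = n or f(n) = −n for every other integer n with 1 ≤ n ≤ 8; (3) f(n) = 1/5 for n ∈ {5, 8}, and f(n) = 1/5 or f(n) = −1/5 for every other integer n with 1 ≤ n ≤ 8. -/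
theorem small_range_trichotomy_k4 (f : ℕ → ℂ)
    (hf : ∀ u v : ℕ, 0 < u → 0 < v →
      f (u ^ 2 + 4 * v ^ 2) = f u ^ 2 + 4 * f v ^ 2) :
    (∀ n : ℕ, 1 ≤ n → n ≤ 8 → f n = 0) ∨
    (∀ n : ℕ, 1 ≤ n → n ≤ 8 →
      ((n = 5 ∨ n = 8) → f n = (n : ℂ)) ∧
      (¬ (n = 5 ∨ n = 8) → f n = (n : ℂ) ∨ f n = -(n : ℂ))) ∨
    (∀ n : ℕ, 1 ≤ n → n ≤ 8 →
      ((n = 5 ∨ n = 8) → f n = 1 / 5) ∧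
      (¬ (n = 5 ∨ n = 8) → f n = 1 / 5 ∨ f n = -(1 / 5))) := by
  have sqc : ∀ x c : ℂ, x ^ 2 = c ^ 2 → x = c ∨ x = -c := by
    intro x c h
    have h2 : (x - c) * (x + c) = 0 := by linear_combination h
    rcases mul_eq_zero.mp h2 with h | h
    · exact Or.inl (sub_eq_zero.mp h)
    · exact Or.inr (eq_neg_of_add_eq_zero_left h)
  have e11 := hf 1 1 (by norm_num) (by norm_num)
  have e21 := hf 2 1 (by norm_num) (by norm_num)
  have e31 := hf 3 1 (by norm_num) (by norm_num)
  have e41 := hf 4 1 (by norm_num) (by norm_num)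
  have e22 := hf 2 2 (by norm_num) (by norm_num)
  have e14 := hf 1 4 (by norm_num) (by norm_num)
  have e72 := hf 7 2 (by norm_num) (by norm_num)
  have e82 := hf 8 2 (by norm_num) (by norm_num)
  have e44 := hf 4 4 (by norm_num) (by norm_num)
  have e55 := hf 5 5 (by norm_num) (by norm_num)
  have e111 := hf 11 1 (by norm_num) (by norm_num)
  have e57 := hf 5 7 (by norm_num) (by norm_num)
  have e115 := hf 11 5 (by norm_num) (by norm_num)
  have e132 := hf 13 2 (by norm_num) (by norm_num)
  have e114 := hf 11 4 (by norm_num) (by norm_num)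
  have e133 := hf 13 3 (by norm_num) (by norm_num)
  have e37 := hf 3 7 (by norm_num) (by norm_num)
  have e61 := hf 6 1 (by norm_num) (by norm_num)
  have e23 := hf 2 3 (by norm_num) (by norm_num)
  norm_num at e11 e21 e31 e41 e22 e14 e72 e82 e44 e55 e111 e57 e115 e132 e114 e133 e37 e61 e23
  -- d^2 = 5 b^2 - 4 a^2  (from 20)
  have hd : f 4 ^ 2 = 5 * f 2 ^ 2 - 4 * f 1 ^ 2 := by linear_combination e22 - e41
  -- p^2 = 16 b^2 - 15 a^2  (from 65)
  have hp : f 7 ^ 2 = 16 * f 2 ^ 2 - 15 * f 1 ^ 2 := by linear_combination e14 - e72 + 4 * hd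
  -- x^2 = 125 a^4 - 4 a^2  (from 125)
  have hx : f 11 ^ 2 = 125 * f 1 ^ 4 - 4 * f 1 ^ 2 := by
    linear_combination e55 - e111 + (5 * f 5 + 25 * f 1 ^ 2) * e11
  -- p^2 = 50 a^4 - a^2  (from 221)
  have hp2 : f 7 ^ 2 = 50 * f 1 ^ 4 - f 1 ^ 2 := by
    linear_combination (e115 - e57 + hx + (3 * f 5 + 15 * f 1 ^ 2) * e11) / 4
  -- 8 b^2 = 25 a^4 + 7 a^2
  have hb : 8 * f 2 ^ 2 = 25 * f 1 ^ 4 + 7 * f 1 ^ 2 := by linear_combination (hp2 - hp) / 2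
  -- (b^2+4a^2)^2 = 21 b^2 - 20 a^2  (from 80)
  have hq2 : (f 2 ^ 2 + 4 * f 1 ^ 2) ^ 2 = 21 * f 2 ^ 2 - 20 * f 1 ^ 2 := by
    linear_combination e44 - e82 + 5 * hd - (f 8 + f 2 ^ 2 + 4 * f 1 ^ 2) * e21
  have P : 625 * f 1 ^ 8 + 1950 * f 1 ^ 6 - 2679 * f 1 ^ 4 + 104 * f 1 ^ 2 = 0 := by
    linear_combination 64 * hq2 + (168 - 8 * f 2 ^ 2 - 25 * f 1 ^ 4 - 71 * f 1 ^ 2) * hb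
  -- y^2 = 175 a^4 - 6 a^2  (from 185)
  have hy2 : f 13 ^ 2 = 175 * f 1 ^ 4 - 6 * f 1 ^ 2 := by
    linear_combination e114 - e132 + hx + 4 * hd + 2 * hb
  -- 3 c^2 = 25 a^4 + 2 a^2  (from 205)
  have hc : 3 * f 3 ^ 2 = 25 * f 1 ^ 4 + 2 * f 1 ^ 2 := by
    linear_combination e37 - e133 + 4 * hp2 - hy2
  have Q : 625 * f 1 ^ 8 + 700 * f 1 ^ 6 - 1379 * f 1 ^ 4 + 54 * f 1 ^ 2 = 0 := by
    linear_combination 9 * hy2 - (3 * f 13 + 25 * f 1 ^ 4 + 14 * f 1 ^ 2) * 3 * e31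
      - (3 * f 13 + 25 * f 1 ^ 4 + 14 * f 1 ^ 2) * hc
  have key : f 1 ^ 2 * (f 1 ^ 2 - 1) * (25 * f 1 ^ 2 - 1) = 0 := by
    linear_combination (P - Q) / 50
  rcases mul_eq_zero.mp key with h | ht2
  · rcases mul_eq_zero.mp h with ht0 | ht1
    · -- all zero
      left
      have hb0 : f 2 ^ 2 = 0 := by linear_combination hb / 8 + (25 * f 1 ^ 2 + 7) / 8 * ht0
      have hc0 : f 3 ^ 2 = 0 := by linear_combination hc / 3 + (25 * f 1 ^ 2 + 2) / 3 * ht0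
      have hd0 : f 4 ^ 2 = 0 := by linear_combination hd + 5 * hb0 - 4 * ht0
      have hg0 : f 6 ^ 2 = 0 := by linear_combination e23 - e61 + hb0 + 4 * hc0 - 4 * ht0
      have hp0 : f 7 ^ 2 = 0 := by linear_combination hp2 + (50 * f 1 ^ 2 - 1) * ht0
      have h5 : f 5 = 0 := by linear_combination e11 + 5 * ht0
      have h8 : f 8 = 0 := by linear_combination e21 + hb0 + 4 * ht0
      intro n hn1 hn8
      interval_cases n
      · exact sq_eq_zero_iff.mp ht0
      · exact sq_eq_zero_iff.mp hb0
      · exact sq_eq_zero_iff.mp hc0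
      · exact sq_eq_zero_iff.mp hd0
      · exact h5
      · exact sq_eq_zero_iff.mp hg0
      · exact sq_eq_zero_iff.mp hp0
      · exact h8
    · -- f n = ± n
      right; left
      have hb1 : f 2 ^ 2 = 4 := by linear_combination hb / 8 + (25 * f 1 ^ 2 + 32) / 8 * ht1
      have hc1 : f 3 ^ 2 = 9 := by linear_combination hc / 3 + (25 * f 1 ^ 2 + 27) / 3 * ht1
      have hd1 : f 4 ^ 2 = 16 := by linear_combination hd + 5 * hb1 - 4 * ht1
      have hg1 : f 6 ^ 2 = 36 := by linear_combination e23 - e61 + hb1 + 4 * hc1 - 4 * ht1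
      have hp1 : f 7 ^ 2 = 49 := by linear_combination hp2 + (50 * f 1 ^ 2 + 49) * ht1
      have h5 : f 5 = 5 := by linear_combination e11 + 5 * ht1
      have h8 : f 8 = 8 := by linear_combination e21 + hb1 + 4 * ht1
      intro n hn1 hn8
      interval_cases n
      · exact ⟨fun h => by norm_num at h,
          fun _ => by push_cast; exact sqc (f 1) 1 (by linear_combination ht1)⟩
      · exact ⟨fun h => by norm_num at h,
          fun _ => by push_cast; exact sqc (f 2) 2 (by linear_combination hb1)⟩
      · exact ⟨fun h => by norm_num at h,
          fun _ => by push_cast; exact sqc (f 3) 3 (by linear_combination hc1)⟩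
      · exact ⟨fun h => by norm_num at h,
          fun _ => by push_cast; exact sqc (f 4) 4 (by linear_combination hd1)⟩
      · exact ⟨fun _ => by push_cast; exact h5, fun h => absurd (Or.inl rfl) h⟩
      · exact ⟨fun h => by norm_num at h,
          fun _ => by push_cast; exact sqc (f 6) 6 (by linear_combination hg1)⟩
      · exact ⟨fun h => by norm_num at h,
          fun _ => by push_cast; exact sqc (f 7) 7 (by linear_combination hp1)⟩
      · exact ⟨fun _ => by push_cast; exact h8, fun h => absurd (Or.inr rfl) h⟩
  · -- f n = ± 1/5
    right; right
    have ht2' : f 1 ^ 2 = 1 / 25 := by linear_combination ht2 / 25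
    have hb2 : f 2 ^ 2 = 1 / 25 := by
      linear_combination hb / 8 + (25 * f 1 ^ 2 + 8) / 200 * ht2
    have hc2 : f 3 ^ 2 = 1 / 25 := by
      linear_combination hc / 3 + (25 * f 1 ^ 2 + 3) / 75 * ht2
    have hd2 : f 4 ^ 2 = 1 / 25 := by linear_combination hd + 5 * hb2 - 4 * ht2'
    have hg2 : f 6 ^ 2 = 1 / 25 := by
      linear_combination e23 - e61 + hb2 + 4 * hc2 - 4 * ht2'
    have hp2' : f 7 ^ 2 = 1 / 25 := by
      linear_combination hp2 + (50 * f 1 ^ 2 + 1) / 25 * ht2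
    have h5 : f 5 = 1 / 5 := by linear_combination e11 + ht2 / 5
    have h8 : f 8 = 1 / 5 := by linear_combination e21 + hb2 + 4 * ht2'
    intro n hn1 hn8
    interval_cases n
    · exact ⟨fun h => by norm_num at h,
        fun _ => sqc (f 1) (1 / 5) (by linear_combination ht2')⟩
    · exact ⟨fun h => by norm_num at h,
        fun _ => sqc (f 2) (1 / 5) (by linear_combination hb2)⟩
    · exact ⟨fun h => by norm_num at h,
        fun _ => sqc (f 3) (1 / 5) (by linear_combination hc2)⟩
    · exact ⟨fun h => by norm_num at h,
        fun _ => sqc (f 4) (1 / 5) (by linear_combination hd2)⟩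
    · exact ⟨fun _ => h5, fun h => absurd (Or.inl rfl) h⟩
    · exact ⟨fun h => by norm_num at h,
        fun _ => sqc (f 6) (1 / 5) (by linear_combination hg2)⟩
    · exact ⟨fun h => by norm_num at h,
        fun _ => sqc (f 7) (1 / 5) (by linear_combination hp2')⟩
    · exact ⟨fun _ => h8, fun h => absurd (Or.inr rfl) h⟩
end

section
/- Let f : N → C satisfy f(u² + 4v²) = f(u)² + 4·f(v)² for all positive integers u, v. Then one of the following holds: (1) f(n) = 0 for every positive integer n; (2) for every positive integer n, f(n) = n whenever there exist positive integers u, v with n = u² + 4v², and f(n) = n or f(n) = −n otherwise; (3) for every positive integer n, f(n) = 1/5 whenever there exist positive integers u, v with n = u² + 4v², and f(n) = 1/5 or f(n) = −1/5 otherwise. -/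
lemma aux_sq (f g : ℕ → ℂ)
    (hf : ∀ u v : ℕ, 0 < u → 0 < v →
      f (u ^ 2 + 4 * v ^ 2) = f u ^ 2 + 4 * f v ^ 2)
    (hgE : ∀ m : ℕ, g (2*m+4) + 4 * g (m+1) = g (2*m+2) + 4 * g (m+2))
    (hg1 : ∀ t : ℕ, g (4*t+9) + 4 * g (t+1) = g (4*t+7) + 4 * g (t+3))
    (hg3 : ∀ t : ℕ, g (4*t+7) + 4 * g (3*t+2) = g (4*t+1) + 4 * g (3*t+4))
    (h1 : f 1 ^ 2 = g 1) (h2 : f 2 ^ 2 = g 2) (h3 : f 3 ^ 2 = g 3)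
    (h5 : f 5 ^ 2 = g 5) :
    ∀ n : ℕ, 1 ≤ n → f n ^ 2 = g n := by
  intro n
  induction n using Nat.strong_induction_on with
  | _ n ih =>
  intro hn
  by_cases e1 : n = 1; · rw [e1]; exact h1
  by_cases e2 : n = 2; · rw [e2]; exact h2
  by_cases e3 : n = 3; · rw [e3]; exact h3
  by_cases e5 : n = 5; · rw [e5]; exact h5
  rcases Nat.even_or_odd n with he | ho
  · obtain ⟨r, hr⟩ := he
    obtain ⟨m, rfl⟩ : ∃ m, n = 2*m+4 := ⟨n/2 - 2, by omega⟩
    have ha := hf (2*m+4) (m+1) (by omega) (by omega)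
    have hb := hf (2*m+2) (m+2) (by omega) (by omega)
    have harg : (2*m+4)^2 + 4*(m+1)^2 = (2*m+2)^2+4*(m+2)^2 := by ring
    rw [harg] at ha
    have key : f (2*m+4)^2 + 4 * f (m+1)^2 = f (2*m+2)^2 + 4 * f (m+2)^2 := by
      linear_combination hb - ha
    have i1 := ih (m+1) (by omega) (by omega)
    have i2 := ih (2*m+2) (by omega) (by omega)
    have i3 := ih (m+2) (by omega) (by omega)
    linear_combination key - hgE m - 4*i1 + i2 + 4*i3
  · obtain ⟨r, hr⟩ := ho
    have hm4 : n % 4 = 1 ∨ n % 4 = 3 := by omega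
    rcases hm4 with hm | hm
    · obtain ⟨t, rfl⟩ : ∃ t, n = 4*t+9 := ⟨n/4 - 2, by omega⟩
      have ha := hf (4*t+9) (t+1) (by omega) (by omega)
      have hb := hf (4*t+7) (t+3) (by omega) (by omega)
      have harg : (4*t+9)^2 + 4*(t+1)^2 = (4*t+7)^2+4*(t+3)^2 := by ring
      rw [harg] at ha
      have key : f (4*t+9)^2 + 4 * f (t+1)^2 = f (4*t+7)^2 + 4 * f (t+3)^2 := by
        linear_combination hb - ha
      have i1 := ih (t+1) (by omega) (by omega)
      have i2 := ih (4*t+7) (by omega) (by omega)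
      have i3 := ih (t+3) (by omega) (by omega)
      linear_combination key - hg1 t - 4*i1 + i2 + 4*i3
    · obtain ⟨t, rfl⟩ : ∃ t, n = 4*t+7 := ⟨n/4 - 1, by omega⟩
      have ha := hf (4*t+7) (3*t+2) (by omega) (by omega)
      have hb := hf (4*t+1) (3*t+4) (by omega) (by omega)
      have harg : (4*t+7)^2 + 4*(3*t+2)^2 = (4*t+1)^2+4*(3*t+4)^2 := by ring
      rw [harg] at ha
      have key : f (4*t+7)^2 + 4 * f (3*t+2)^2 = f (4*t+1)^2 + 4 * f (3*t+4)^2 := by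
        linear_combination hb - ha
      have i1 := ih (3*t+2) (by omega) (by omega)
      have i2 := ih (4*t+1) (by omega) (by omega)
      have i3 := ih (3*t+4) (by omega) (by omega)
      linear_combination key - hg3 t - 4*i1 + i2 + 4*i3


theorem conjecture_k4 (f : ℕ → ℂ)
    (hf : ∀ u v : ℕ, 0 < u → 0 < v →
      f (u ^ 2 + 4 * v ^ 2) = f u ^ 2 + 4 * f v ^ 2) :
    (∀ n : ℕ, 1 ≤ n → f n = 0) ∨
    (∀ n : ℕ, 1 ≤ n →
      ((∃ u v : ℕ, 0 < u ∧ 0 < v ∧ n = u ^ 2 + 4 * v ^ 2) → f n = (n : ℂ)) ∧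
      (¬ (∃ u v : ℕ, 0 < u ∧ 0 < v ∧ n = u ^ 2 + 4 * v ^ 2) → f n = (n : ℂ) ∨ f n = -(n : ℂ))) ∨
    (∀ n : ℕ, 1 ≤ n →
      ((∃ u v : ℕ, 0 < u ∧ 0 < v ∧ n = u ^ 2 + 4 * v ^ 2) → f n = 1 / 5) ∧
      (¬ (∃ u v : ℕ, 0 < u ∧ 0 < v ∧ n = u ^ 2 + 4 * v ^ 2) → f n = 1 / 5 ∨ f n = -(1 / 5))) := by
  have q11 : f 5 = f 1 ^ 2 + 4 * f 1 ^ 2 := by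
    have h := hf 1 1 one_pos one_pos; norm_num at h; exact h
  have q21 : f 8 = f 2 ^ 2 + 4 * f 1 ^ 2 := by
    have h := hf 2 1 (by norm_num) one_pos; norm_num at h; linear_combination h
  have q31 : f 13 = f 3 ^ 2 + 4 * f 1 ^ 2 := by
    have h := hf 3 1 (by norm_num) one_pos; norm_num at h; linear_combination h
  have q51 : f 29 = f 5 ^ 2 + 4 * f 1 ^ 2 := by
    have h := hf 5 1 (by norm_num) one_pos; norm_num at h; linear_combination h
  have hD : f 4 ^ 2 = 5 * f 2 ^ 2 - 4 * f 1 ^ 2 := by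
    have h1 := hf 4 1 (by norm_num) one_pos
    have h2 := hf 2 2 (by norm_num) (by norm_num)
    norm_num at h1 h2; linear_combination h2 - h1
  have hE1 : (f 2 ^ 2 + 4 * f 1 ^ 2) ^ 2 = 21 * f 2 ^ 2 - 20 * f 1 ^ 2 := by
    have h1 := hf 8 1 (by norm_num) one_pos
    have h2 := hf 2 4 (by norm_num) (by norm_num)
    norm_num at h1 h2
    linear_combination h2 - h1 + 4 * hD - (f 8 + f 2 ^ 2 + 4 * f 1 ^ 2) * q21
  have hP : f 7 ^ 2 = 16 * f 2 ^ 2 - 15 * f 1 ^ 2 := by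
    have h1 := hf 7 2 (by norm_num) (by norm_num)
    have h2 := hf 1 4 one_pos (by norm_num)
    norm_num at h1 h2; linear_combination h2 - h1 + 4 * hD
  have hQ : f 11 ^ 2 = 125 * (f 1 ^ 2) ^ 2 - 4 * f 1 ^ 2 := by
    have h1 := hf 11 1 (by norm_num) one_pos
    have h2 := hf 5 5 (by norm_num) (by norm_num)
    norm_num at h1 h2
    linear_combination h2 - h1 + 5 * (f 5 + 5 * f 1 ^ 2) * q11
  have h13sq : f 13 ^ 2 = 16 * f 2 ^ 2 - 20 * f 1 ^ 2 + 125 * (f 1 ^ 2) ^ 2 := by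
    have h1 := hf 13 2 (by norm_num) (by norm_num)
    have h2 := hf 11 4 (by norm_num) (by norm_num)
    norm_num at h1 h2; linear_combination h2 - h1 + hQ + 4 * hD
  have hC : 3 * f 3 ^ 2 = 48 * f 2 ^ 2 - 40 * f 1 ^ 2 - 125 * (f 1 ^ 2) ^ 2 := by
    have h1 := hf 3 7 (by norm_num) (by norm_num)
    have h2 := hf 13 3 (by norm_num) (by norm_num)
    norm_num at h1 h2; linear_combination h1 - h2 + 4 * hP - h13sq
  have h80 : 80 * f 2 ^ 2 = 104 * f 1 ^ 2 - 609 * (f 1 ^ 2) ^ 2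
      + 200 * (f 1 ^ 2) ^ 3 + 625 * (f 1 ^ 2) ^ 4 := by
    have h1 := hf 29 1 (by norm_num) one_pos
    have h2 := hf 13 13 (by norm_num) (by norm_num)
    norm_num at h1 h2
    linear_combination h1 - h2 - 5 * h13sq + (f 29 + f 5 ^ 2 + 4 * f 1 ^ 2) * q51
      + (f 5 + 5 * f 1 ^ 2) * (f 5 ^ 2 + 25 * (f 1 ^ 2) ^ 2 + 8 * f 1 ^ 2) * q11
  have hBA : (48 * f 2 ^ 2 - 28 * f 1 ^ 2 - 125 * (f 1 ^ 2) ^ 2) ^ 2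
      = 9 * (16 * f 2 ^ 2 - 20 * f 1 ^ 2 + 125 * (f 1 ^ 2) ^ 2) := by
    linear_combination -(3 * f 3 ^ 2 + 12 * f 1 ^ 2 + 48 * f 2 ^ 2 - 28 * f 1 ^ 2 - 125 * (f 1 ^ 2) ^ 2) * hC
      - 9 * (f 13 + f 3 ^ 2 + 4 * f 1 ^ 2) * q31 + 9 * h13sq
  have hA : f 1 ^ 2 * (f 1 ^ 2 - 1) * (25 * f 1 ^ 2 - 1) = 0 := by
    linear_combination (((-52981384335296 : ℂ)/393816353523935)
      + ((-584820018205056 : ℂ)/1969081767619675) * (f 1 ^ 2)^1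
      + ((6373118805596736 : ℂ)/1969081767619675) * (f 1 ^ 2)^2
      + ((-94360711093632 : ℂ)/78763270704787) * (f 1 ^ 2)^3
      + ((-190881081417600 : ℂ)/78763270704787) * (f 1 ^ 2)^4) * hE1
      + (((-12536540285667 : ℂ)/315053082819148)
      + ((28871258809288 : ℂ)/393816353523935) * (f 2 ^ 2)^1
      + ((-7891941183123 : ℂ)/157526541409574) * (f 1 ^ 2)^1
      + ((-15384561180624 : ℂ)/393816353523935) * (f 1 ^ 2)^1 * (f 2 ^ 2)^1
      + ((-85053656873289 : ℂ)/1575265414095740) * (f 1 ^ 2)^2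
      + ((-1590675678480 : ℂ)/78763270704787) * (f 1 ^ 2)^2 * (f 2 ^ 2)^1
      + ((2577983713435 : ℂ)/157526541409574) * (f 1 ^ 2)^3
      + ((4142384579375 : ℂ)/157526541409574) * (f 1 ^ 2)^4) * h80
      + (((-3917915486819 : ℂ)/1575265414095740)
      + ((5849517786853 : ℂ)/3938163535239350) * (f 1 ^ 2)^1
      + ((-5541262931661 : ℂ)/7876327070478700) * (f 1 ^ 2)^2
      + ((81910339491 : ℂ)/157526541409574) * (f 1 ^ 2)^3
      + ((165695383175 : ℂ)/157526541409574) * (f 1 ^ 2)^4) * hBA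
  rcases mul_eq_zero.mp hA with hA' | h5'
  · rcases mul_eq_zero.mp hA' with h0 | h1'
    · -- case f 1 ^ 2 = 0
      have hB : f 2 ^ 2 = 0 := by
        linear_combination (1/80) * h80
          + ((104 - 609 * f 1 ^ 2 + 200 * (f 1 ^ 2) ^ 2 + 625 * (f 1 ^ 2) ^ 3)/80) * h0
      have hC3 : f 3 ^ 2 = 0 := by
        linear_combination (1/3) * hC + 16 * hB - ((40 + 125 * f 1 ^ 2)/3) * h0
      have h5sq : f 5 ^ 2 = 0 := by
        linear_combination (f 5 + 5 * f 1 ^ 2) * q11 + 25 * f 1 ^ 2 * h0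
      left
      have K := aux_sq f (fun _ => 0) hf (by intro m; norm_num) (by intro t; norm_num)
        (by intro t; norm_num) h0 hB hC3 h5sq
      intro n hn
      exact pow_eq_zero_iff two_ne_zero |>.mp (K n hn)
    · -- case f 1 ^ 2 = 1
      have hA1 : f 1 ^ 2 = 1 := by linear_combination h1'
      have hB : f 2 ^ 2 = 4 := by
        linear_combination (1/80) * h80
          + ((625 * (f 1 ^ 2) ^ 3 + 825 * (f 1 ^ 2) ^ 2 + 216 * f 1 ^ 2 + 320)/80) * h1'
      have hC3 : f 3 ^ 2 = 9 := by
        linear_combination (1/3) * hC + 16 * hB - ((125 * f 1 ^ 2 + 165)/3) * h1'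
      have h5sq : f 5 ^ 2 = 25 := by
        linear_combination (f 5 + 5 * f 1 ^ 2) * q11 + 25 * (f 1 ^ 2 + 1) * h1'
      right; left
      have K := aux_sq f (fun n => ((n : ℕ) : ℂ) ^ 2) hf
        (by intro m; push_cast; ring) (by intro t; push_cast; ring)
        (by intro t; push_cast; ring)
        (by norm_num [hA1]) (by norm_num [hB]) (by norm_num [hC3]) (by norm_num [h5sq])
      intro n hn
      constructor
      · rintro ⟨u, v, hu, hv, huv⟩
        have e := hf u v hu hv
        rw [← huv] at e
        rw [e, K u hu, K v hv, huv]
        push_cast; ring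
      · intro _
        have hs := K n hn
        have hfac : (f n - (n : ℂ)) * (f n + (n : ℂ)) = 0 := by linear_combination hs
        rcases mul_eq_zero.mp hfac with h | h
        · left; linear_combination h
        · right; linear_combination h
  · -- case 25 * f 1 ^ 2 - 1 = 0
    have hA1 : f 1 ^ 2 = 1/25 := by linear_combination (1/25) * h5'
    have hB : f 2 ^ 2 = 1/25 := by
      linear_combination (1/80) * h80
        + ((625 * (f 1 ^ 2) ^ 3 + 225 * (f 1 ^ 2) ^ 2 - 600 * f 1 ^ 2 + 80)/80) * hA1
    have hC3 : f 3 ^ 2 = 1/25 := by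
      linear_combination (1/3) * hC + 16 * hB - ((125 * f 1 ^ 2 + 45)/3) * hA1
    have h5sq : f 5 ^ 2 = 1/25 := by
      linear_combination (f 5 + 5 * f 1 ^ 2) * q11 + 25 * (f 1 ^ 2 + 1/25) * hA1
    right; right
    have K := aux_sq f (fun _ => 1/25) hf (by intro m; norm_num) (by intro t; norm_num)
      (by intro t; norm_num) hA1 hB hC3 h5sq
    intro n hn
    constructor
    · rintro ⟨u, v, hu, hv, huv⟩
      have e := hf u v hu hv
      rw [← huv] at e
      rw [e, K u hu, K v hv]
      norm_num
    · intro _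
      have hs := K n hn
      have hfac : (f n - 1/5) * (f n + 1/5) = 0 := by
        have hs' : f n ^ 2 = 1/25 := hs
        linear_combination hs'
      rcases mul_eq_zero.mp hfac with h | h
      · left; linear_combination h
      · right; linear_combination h
end

section
/- Let f : N → C satisfy f(u² + 5v²) = f(u)² + 5·f(v)² for all positive integers u, v, and write a = f(1), b = f(2). Then f(3)² = (8b² − 5a²)/3, f(4)² = 5b² − 4a², f(5)² = 8b² − 7a², f(6)² = (35b² − 32a²)/3, f(7)² = 16b² − 15a², f(8)² = 21b² − 20a², f(9)² = (80b² − 77a²)/3, and f(10)² = 33b² − 32a². -/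
theorem squares_formulae_k5 (f : ℕ → ℂ)
    (hf : ∀ u v : ℕ, 0 < u → 0 < v →
      f (u ^ 2 + 5 * v ^ 2) = f u ^ 2 + 5 * f v ^ 2)
    (a b : ℂ) (ha : a = f 1) (hb : b = f 2) :
    f 3 ^ 2 = (8 * b ^ 2 - 5 * a ^ 2) / 3 ∧
    f 4 ^ 2 = 5 * b ^ 2 - 4 * a ^ 2 ∧
    f 5 ^ 2 = 8 * b ^ 2 - 7 * a ^ 2 ∧
    f 6 ^ 2 = (35 * b ^ 2 - 32 * a ^ 2) / 3 ∧
    f 7 ^ 2 = 16 * b ^ 2 - 15 * a ^ 2 ∧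
    f 8 ^ 2 = 21 * b ^ 2 - 20 * a ^ 2 ∧
    f 9 ^ 2 = (80 * b ^ 2 - 77 * a ^ 2) / 3 ∧
    f 10 ^ 2 = 33 * b ^ 2 - 32 * a ^ 2 := by
  subst ha hb
  have h41 := hf 4 1 (by norm_num) (by norm_num)
  have h12 := hf 1 2 (by norm_num) (by norm_num)
  have h82 := hf 8 2 (by norm_num) (by norm_num)
  have h24 := hf 2 4 (by norm_num) (by norm_num)
  have h81 := hf 8 1 (by norm_num) (by norm_num)
  have h72 := hf 7 2 (by norm_num) (by norm_num)
  have h71 := hf 7 1 (by norm_num) (by norm_num)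
  have h33 := hf 3 3 (by norm_num) (by norm_num)
  have h63 := hf 6 3 (by norm_num) (by norm_num)
  have h14 := hf 1 4 (by norm_num) (by norm_num)
  have h25 := hf 2 5 (by norm_num) (by norm_num)
  have h74 := hf 7 4 (by norm_num) (by norm_num)
  have h93 := hf 9 3 (by norm_num) (by norm_num)
  have h15 := hf 1 5 (by norm_num) (by norm_num)
  have hA1 := hf 10 1 (by norm_num) (by norm_num)
  have h54 := hf 5 4 (by norm_num) (by norm_num)
  norm_num at h41 h12 h82 h24 h81 h72 h71 h33 h63 h14 h25 h74 h93 h15 hA1 h54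
  have e4 : f 4 ^ 2 = 5 * f 2 ^ 2 - 4 * f 1 ^ 2 := by linear_combination h12 - h41
  have e8 : f 8 ^ 2 = 21 * f 2 ^ 2 - 20 * f 1 ^ 2 := by
    linear_combination h24 - h82 + 5 * e4
  have e7 : f 7 ^ 2 = 16 * f 2 ^ 2 - 15 * f 1 ^ 2 := by
    linear_combination h81 - h72 + e8
  have e3 : f 3 ^ 2 = (8 * f 2 ^ 2 - 5 * f 1 ^ 2) / 3 := by
    linear_combination (h71 - h33 + e7) / 6
  have e6 : f 6 ^ 2 = (35 * f 2 ^ 2 - 32 * f 1 ^ 2) / 3 := by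
    linear_combination h14 - h63 + 5 * e4 - 5 * e3
  have e5 : f 5 ^ 2 = 8 * f 2 ^ 2 - 7 * f 1 ^ 2 := by
    linear_combination (h74 - h25 + e7 + 5 * e4) / 5
  have e9 : f 9 ^ 2 = (80 * f 2 ^ 2 - 77 * f 1 ^ 2) / 3 := by
    linear_combination h15 - h93 + 5 * e5 - 5 * e3
  have eA : f 10 ^ 2 = 33 * f 2 ^ 2 - 32 * f 1 ^ 2 := by
    linear_combination h54 - hA1 + e5 + 5 * e4
  exact ⟨e3, e4, e5, e6, e7, e8, e9, eA⟩
end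

section
/- Let f : N → C satisfy f(u² + 5v²) = f(u)² + 5·f(v)² for all positive integers u, v. Then f(1) ∈ {0, 1, −1, 1/6, −1/6}. -/
theorem value_f1_k5 (f : ℕ → ℂ)
    (hf : ∀ u v : ℕ, 0 < u → 0 < v →
      f (u ^ 2 + 5 * v ^ 2) = f u ^ 2 + 5 * f v ^ 2) :
    f 1 = 0 ∨ f 1 = 1 ∨ f 1 = -1 ∨ f 1 = 1 / 6 ∨ f 1 = -(1 / 6) := by
  have h6 := hf 1 1 (by norm_num) (by norm_num)
  have h9 := hf 2 1 (by norm_num) (by norm_num)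
  have h21a := hf 4 1 (by norm_num) (by norm_num)
  have h21b := hf 1 2 (by norm_num) (by norm_num)
  have h54a := hf 7 1 (by norm_num) (by norm_num)
  have h54b := hf 3 3 (by norm_num) (by norm_num)
  have h69a := hf 8 1 (by norm_num) (by norm_num)
  have h69b := hf 7 2 (by norm_num) (by norm_num)
  have h84a := hf 2 4 (by norm_num) (by norm_num)
  have h84b := hf 8 2 (by norm_num) (by norm_num)
  have h126a := hf 1 5 (by norm_num) (by norm_num)
  have h126b := hf 9 3 (by norm_num) (by norm_num)
  have h126c := hf 11 1 (by norm_num) (by norm_num)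
  have h189a := hf 3 6 (by norm_num) (by norm_num)
  have h189b := hf 12 3 (by norm_num) (by norm_num)
  have h189c := hf 8 5 (by norm_num) (by norm_num)
  have h324a := hf 2 8 (by norm_num) (by norm_num)
  have h324b := hf 12 6 (by norm_num) (by norm_num)
  have h686a := hf 9 11 (by norm_num) (by norm_num)
  have h686b := hf 21 7 (by norm_num) (by norm_num)
  norm_num at h6 h9 h21a h21b h54a h54b h69a h69b h84a h84b h126a h126b h126c h189a h189b h189c h324a h324b h686a h686b
  set a := f 1 with ha
  set b := f 2 with hb
  set c := f 3 with hc0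
  set d := f 4 with hd0
  set e := f 5 with he0
  set p := f 7 with hp0
  set q := f 8 with hq0
  set r := f 11 with hr0
  set s := f 12 with hs0
  -- basic derived equations
  have hd : d ^ 2 = 5 * b ^ 2 - 4 * a ^ 2 := by linear_combination h21b - h21a
  have hq : q ^ 2 = 21 * b ^ 2 - 20 * a ^ 2 := by
    linear_combination h84a - h84b + 5 * hd
  have hp : p ^ 2 = 16 * b ^ 2 - 15 * a ^ 2 := by
    linear_combination h69a - h69b + hq
  have hc : 3 * c ^ 2 = 8 * b ^ 2 - 5 * a ^ 2 := by
    linear_combination (1/2 : ℂ) * (h54a - h54b) + (1/2 : ℂ) * hp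
  have h9sq : f 9 ^ 2 = (b ^ 2 + 5 * a ^ 2) ^ 2 := by rw [h9]
  have he : 15 * e ^ 2 = 3 * (b ^ 2 + 5 * a ^ 2) ^ 2 + 40 * b ^ 2 - 28 * a ^ 2 := by
    linear_combination 3 * (h126b - h126a) + 3 * h9sq + 5 * hc
  have hr : 3 * r ^ 2 = 3 * (b ^ 2 + 5 * a ^ 2) ^ 2 + 40 * b ^ 2 - 40 * a ^ 2 := by
    linear_combination 3 * (h126b - h126c) + 3 * h9sq + 5 * hc
  have h6sq : f 6 ^ 2 = 36 * a ^ 4 := by rw [h6]; ring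
  have hs : 3 * s ^ 2 = 540 * a ^ 4 - 32 * b ^ 2 + 20 * a ^ 2 := by
    linear_combination 3 * (h189a - h189b) + 15 * h6sq - 4 * hc
  have h21sq : f 21 ^ 2 = (a ^ 2 + 5 * b ^ 2) ^ 2 := by rw [h21b]
  have Q1 : 35 * b ^ 2 = 108 * a ^ 4 + 32 * a ^ 2 := by
    linear_combination (-3/10 : ℂ) * (h324a - h324b) - (3/2 : ℂ) * hq
      + (1/10 : ℂ) * hs + (3/2 : ℂ) * h6sq
  have P1 : 57 * b ^ 4 = 150 * a ^ 2 * b ^ 2 + 447 * a ^ 4 - 40 * b ^ 2 + 25 * a ^ 2 := by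
    linear_combination 3 * (h686a - h686b) + 3 * h9sq - 3 * h21sq + 5 * hr - 15 * hp
  have Q3 : 3 * (b ^ 2 + 5 * a ^ 2) ^ 2 = 540 * a ^ 4 - 95 * b ^ 2 + 83 * a ^ 2 := by
    linear_combination 3 * (h189a - h189c) + 15 * h6sq + hc - 3 * hq - he
  have key : a ^ 2 * (a ^ 2 - 1) * (36 * a ^ 2 - 1) = 0 := by
    linear_combination (-7/432 : ℂ) * P1 + (133/432 : ℂ) * Q3
      + (-353/432 - a ^ 2 / 3 : ℂ) * Q1
  rcases mul_eq_zero.1 key with h | h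
  · rcases mul_eq_zero.1 h with h | h
    · left; exact pow_eq_zero_iff (n := 2) (by norm_num) |>.1 h
    · have : (a - 1) * (a + 1) = 0 := by linear_combination h
      rcases mul_eq_zero.1 this with h | h
      · right; left; linear_combination h
      · right; right; left; linear_combination h
  · have : (6 * a - 1) * (6 * a + 1) = 0 := by linear_combination h
    rcases mul_eq_zero.1 this with h | h
    · right; right; right; left; linear_combination h / 6
    · right; right; right; right; linear_combination h / 6
end

section
/- Let f : N → C satisfy f(u² + 5v²) = f(u)² + 5·f(v)² for all positive integers u, v. Then one of the following holds: (1) f(n) = 0 for every integer n with 1 ≤ n ≤ 10; (2) f(n) = n for n ∈ {6, 9}, and f(n) = n or f(n) = −n for every other integer n with 1 ≤ n ≤ 10; (3) f(n) = 1/6 for n ∈ {6, 9}, and f(n) = 1/6 or f(n) = −1/6 for every other integer n with 1 ≤ n ≤ 10. -/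
private lemma sq_cases_c {x y : ℂ} (h : x ^ 2 = y ^ 2) : x = y ∨ x = -y := by
  have : (x - y) * (x + y) = 0 := by ring_nf; linear_combination h
  rcases mul_eq_zero.mp this with h' | h'
  · left; exact sub_eq_zero.mp h'
  · right; linear_combination h'

theorem small_range_trichotomy_k5 (f : ℕ → ℂ)
    (hf : ∀ u v : ℕ, 0 < u → 0 < v →
      f (u ^ 2 + 5 * v ^ 2) = f u ^ 2 + 5 * f v ^ 2) :
    (∀ n : ℕ, 1 ≤ n → n ≤ 10 → f n = 0) ∨
    (∀ n : ℕ, 1 ≤ n → n ≤ 10 →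
      ((n = 6 ∨ n = 9) → f n = (n : ℂ)) ∧
      (¬ (n = 6 ∨ n = 9) → f n = (n : ℂ) ∨ f n = -(n : ℂ))) ∨
    (∀ n : ℕ, 1 ≤ n → n ≤ 10 →
      ((n = 6 ∨ n = 9) → f n = 1 / 6) ∧
      (¬ (n = 6 ∨ n = 9) → f n = 1 / 6 ∨ f n = -(1 / 6))) := by
  have h6 : f 6 = 6 * f 1 ^ 2 := by
    have h := hf 1 1 one_pos one_pos; norm_num at h; linear_combination h
  have h9 : f 9 = f 2 ^ 2 + 5 * f 1 ^ 2 := by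
    have h := hf 2 1 (by norm_num) one_pos; norm_num at h; linear_combination h
  have h14 : f 14 = f 3 ^ 2 + 5 * f 1 ^ 2 := by
    have h := hf 3 1 (by norm_num) one_pos; norm_num at h; linear_combination h
  have h21 : f 1 ^ 2 + 5 * f 2 ^ 2 = f 4 ^ 2 + 5 * f 1 ^ 2 := by
    have h1 := hf 1 2 one_pos (by norm_num)
    have h2 := hf 4 1 (by norm_num) one_pos
    norm_num at h1 h2; linear_combination h2 - h1
  have h54 : f 7 ^ 2 + 5 * f 1 ^ 2 = f 3 ^ 2 + 5 * f 3 ^ 2 := by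
    have h1 := hf 7 1 (by norm_num) one_pos
    have h2 := hf 3 3 (by norm_num) (by norm_num)
    norm_num at h1 h2; linear_combination h2 - h1
  have h69 : f 8 ^ 2 + 5 * f 1 ^ 2 = f 7 ^ 2 + 5 * f 2 ^ 2 := by
    have h1 := hf 8 1 (by norm_num) one_pos
    have h2 := hf 7 2 (by norm_num) (by norm_num)
    norm_num at h1 h2; linear_combination h2 - h1
  have h84 : f 8 ^ 2 + 5 * f 2 ^ 2 = f 2 ^ 2 + 5 * f 4 ^ 2 := by
    have h1 := hf 8 2 (by norm_num) (by norm_num)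
    have h2 := hf 2 4 (by norm_num) (by norm_num)
    norm_num at h1 h2; linear_combination h2 - h1
  have h81 : f 6 ^ 2 + 5 * f 3 ^ 2 = f 1 ^ 2 + 5 * f 4 ^ 2 := by
    have h1 := hf 6 3 (by norm_num) (by norm_num)
    have h2 := hf 1 4 one_pos (by norm_num)
    norm_num at h1 h2; linear_combination h2 - h1
  have h105 : f 10 ^ 2 + 5 * f 1 ^ 2 = f 5 ^ 2 + 5 * f 4 ^ 2 := by
    have h1 := hf 10 1 (by norm_num) one_pos
    have h2 := hf 5 4 (by norm_num) (by norm_num)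
    norm_num at h1 h2; linear_combination h2 - h1
  have h126 : f 1 ^ 2 + 5 * f 5 ^ 2 = f 9 ^ 2 + 5 * f 3 ^ 2 := by
    have h1 := hf 1 5 one_pos (by norm_num)
    have h2 := hf 9 3 (by norm_num) (by norm_num)
    norm_num at h1 h2; linear_combination h2 - h1
  have h129 : f 2 ^ 2 + 5 * f 5 ^ 2 = f 7 ^ 2 + 5 * f 4 ^ 2 := by
    have h1 := hf 2 5 (by norm_num) (by norm_num)
    have h2 := hf 7 4 (by norm_num) (by norm_num)
    norm_num at h1 h2; linear_combination h2 - h1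
  have h216 : f 14 ^ 2 + 5 * f 2 ^ 2 = f 6 ^ 2 + 5 * f 6 ^ 2 := by
    have h1 := hf 14 2 (by norm_num) (by norm_num)
    have h2 := hf 6 6 (by norm_num) (by norm_num)
    norm_num at h1 h2; linear_combination h2 - h1
  -- express squares in terms of A := f 1 ^ 2
  have hd : f 4 ^ 2 = 5 * f 2 ^ 2 - 4 * f 1 ^ 2 := by linear_combination -h21
  have hi : f 8 ^ 2 = 21 * f 2 ^ 2 - 20 * f 1 ^ 2 := by
    linear_combination h84 + 5 * hd
  have hh : f 7 ^ 2 = 16 * f 2 ^ 2 - 15 * f 1 ^ 2 := by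
    linear_combination hi - h69
  have hc : 3 * f 3 ^ 2 = 8 * f 2 ^ 2 - 5 * f 1 ^ 2 := by
    linear_combination (1/2) * hh - (1/2) * h54
  have he : f 5 ^ 2 = 8 * f 2 ^ 2 - 7 * f 1 ^ 2 := by
    linear_combination (1/5) * h129 + (1/5) * hh + hd
  have hb : f 2 ^ 2 = (108 * (f 1 ^ 2) ^ 2 + 32 * f 1 ^ 2) / 35 := by
    linear_combination (-3/35) * h81 + (3/35) * (f 6 + 6 * f 1 ^ 2) * h6
      + (1/7) * hc - (3/7) * hd
  have hc' : f 3 ^ 2 = (864 * (f 1 ^ 2) ^ 2 + 81 * f 1 ^ 2) / 105 := by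
    linear_combination (1/3) * hc + (8/3) * hb
  have he' : f 5 ^ 2 = (864 * (f 1 ^ 2) ^ 2 + 11 * f 1 ^ 2) / 35 := by
    linear_combination he + 8 * hb
  have hd' : f 4 ^ 2 = (108 * (f 1 ^ 2) ^ 2 + 4 * f 1 ^ 2) / 7 := by
    linear_combination hd + 5 * hb
  rw [h9] at h126
  rw [hb, hc', he'] at h126
  rw [h14, h6] at h216
  rw [hb, hc'] at h216
  have key0 : f 1 ^ 2 * (f 1 ^ 2 - 1) * (36 * f 1 ^ 2 - 1) * (36 * f 1 ^ 2 + 175) = 0 := by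
    linear_combination (-1225/9 : ℂ) * h126
  have key1 : f 1 ^ 2 * (f 1 ^ 2 - 1) * (36 * f 1 ^ 2 - 1) * (72 * f 1 ^ 2 + 175) = 0 := by
    linear_combination (1225/32 : ℂ) * h216
  have key : f 1 ^ 2 * ((f 1 ^ 2 - 1) * (36 * f 1 ^ 2 - 1)) = 0 := by
    linear_combination (2/175 : ℂ) * key0 - (1/175 : ℂ) * key1
  have hk : f 10 ^ 2 = f 5 ^ 2 + 5 * f 4 ^ 2 - 5 * f 1 ^ 2 := by linear_combination h105
  rcases mul_eq_zero.mp key with hA | hA'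
  · -- f 1 ^ 2 = 0 : everything vanishes
    left
    have z : ∀ x : ℂ, x ^ 2 = 0 → x = 0 := fun x h => by
      exact sq_eq_zero_iff.mp h
    intro n h1 h10
    interval_cases n
    · exact z _ hA
    · refine z _ ?_; rw [hb, hA]; norm_num
    · refine z _ ?_; rw [hc', hA]; norm_num
    · refine z _ ?_; rw [hd', hA]; norm_num
    · refine z _ ?_; rw [he', hA]; norm_num
    · rw [h6, hA]; ring
    · refine z _ ?_; rw [hh, hb, hA]; norm_num
    · refine z _ ?_; rw [hi, hb, hA]; norm_num
    · rw [h9, hb, hA]; norm_num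
    · refine z _ ?_; rw [hk, he', hd', hA]; norm_num
  rcases mul_eq_zero.mp hA' with hA | hA
  · -- f 1 ^ 2 = 1
    right; left
    have hA : f 1 ^ 2 = 1 := by linear_combination hA
    have hb1 : f 2 ^ 2 = 4 := by rw [hb, hA]; norm_num
    have hc1 : f 3 ^ 2 = 9 := by rw [hc', hA]; norm_num
    have hd1 : f 4 ^ 2 = 16 := by rw [hd', hA]; norm_num
    have he1 : f 5 ^ 2 = 25 := by rw [he', hA]; norm_num
    have hh1 : f 7 ^ 2 = 49 := by rw [hh, hb1, hA]; norm_num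
    have hi1 : f 8 ^ 2 = 64 := by rw [hi, hb1, hA]; norm_num
    have hk1 : f 10 ^ 2 = 100 := by rw [hk, he1, hd1, hA]; norm_num
    intro n h1 h10
    interval_cases n <;> norm_num
    · exact sq_cases_c (by rw [hA]; norm_num)
    · exact sq_cases_c (by rw [hb1]; norm_num)
    · exact sq_cases_c (by rw [hc1]; norm_num)
    · exact sq_cases_c (by rw [hd1]; norm_num)
    · exact sq_cases_c (by rw [he1]; norm_num)
    · rw [h6, hA]; norm_num
    · exact sq_cases_c (by rw [hh1]; norm_num)
    · exact sq_cases_c (by rw [hi1]; norm_num)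
    · rw [h9, hb1, hA]; norm_num
    · exact sq_cases_c (by rw [hk1]; norm_num)
  · -- 36 * f 1 ^ 2 - 1 = 0
    right; right
    have hA : f 1 ^ 2 = 1/36 := by linear_combination (1/36 : ℂ) * hA
    have hb1 : f 2 ^ 2 = 1/36 := by rw [hb, hA]; norm_num
    have hc1 : f 3 ^ 2 = 1/36 := by rw [hc', hA]; norm_num
    have hd1 : f 4 ^ 2 = 1/36 := by rw [hd', hA]; norm_num
    have he1 : f 5 ^ 2 = 1/36 := by rw [he', hA]; norm_num
    have hh1 : f 7 ^ 2 = 1/36 := by rw [hh, hb1, hA]; norm_num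
    have hi1 : f 8 ^ 2 = 1/36 := by rw [hi, hb1, hA]; norm_num
    have hk1 : f 10 ^ 2 = 1/36 := by rw [hk, he1, hd1, hA]; norm_num
    intro n h1 h10
    interval_cases n <;> norm_num
    · exact sq_cases_c (x := f 1) (y := 1/6) (by rw [hA]; norm_num)
    · exact sq_cases_c (x := f 2) (y := 1/6) (by rw [hb1]; norm_num)
    · exact sq_cases_c (x := f 3) (y := 1/6) (by rw [hc1]; norm_num)
    · exact sq_cases_c (x := f 4) (y := 1/6) (by rw [hd1]; norm_num)
    · exact sq_cases_c (x := f 5) (y := 1/6) (by rw [he1]; norm_num)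
    · rw [h6, hA]; norm_num
    · exact sq_cases_c (x := f 7) (y := 1/6) (by rw [hh1]; norm_num)
    · exact sq_cases_c (x := f 8) (y := 1/6) (by rw [hi1]; norm_num)
    · rw [h9, hb1, hA]; norm_num
    · exact sq_cases_c (x := f 10) (y := 1/6) (by rw [hk1]; norm_num)
end

section
/- Let f : N → C satisfy f(u² + 5v²) = f(u)² + 5·f(v)² for all positive integers u, v. Then one of the following holds: (1) f(n) = 0 for every positive integer n; (2) for every positive integer n, f(n) = n whenever there exist positive integers u, v with n = u² + 5v², and f(n) = n or f(n) = −n otherwise; (3) for every positive integer n, f(n) = 1/6 whenever there exist positive integers u, v with n = u² + 5v², and f(n) = 1/6 or f(n) = −1/6 otherwise. -/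
theorem aux_k5 (f : ℕ → ℂ) (s t : ℂ)
    (hrec : ∀ m : ℕ, f (m+11) ^ 2 + 5 * f (m+5) ^ 2 = f (m+1) ^ 2 + 5 * f (m+7) ^ 2)
    (hbase : ∀ k : ℕ, 1 ≤ k → k ≤ 10 → f k ^ 2 = s * (k : ℂ) ^ 2 + t) :
    ∀ n : ℕ, 1 ≤ n → f n ^ 2 = s * (n : ℂ) ^ 2 + t := by
  intro n
  induction n using Nat.strong_induction_on with
  | _ n ih =>
    intro hn
    by_cases hsmall : n ≤ 10
    · exact hbase n hn hsmall
    · obtain ⟨m, rfl⟩ : ∃ m, n = m + 11 := ⟨n - 11, by omega⟩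
      have e := hrec m
      have i1 := ih (m+1) (by omega) (by omega)
      have i5 := ih (m+5) (by omega) (by omega)
      have i7 := ih (m+7) (by omega) (by omega)
      push_cast at i1 i5 i7 ⊢
      linear_combination e + i1 + 5*i7 - 5*i5

theorem conjecture_k5 (f : ℕ → ℂ)
    (hf : ∀ u v : ℕ, 0 < u → 0 < v →
      f (u ^ 2 + 5 * v ^ 2) = f u ^ 2 + 5 * f v ^ 2) :
    (∀ n : ℕ, 1 ≤ n → f n = 0) ∨
    (∀ n : ℕ, 1 ≤ n →
      ((∃ u v : ℕ, 0 < u ∧ 0 < v ∧ n = u ^ 2 + 5 * v ^ 2) → f n = (n : ℂ)) ∧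
      (¬ (∃ u v : ℕ, 0 < u ∧ 0 < v ∧ n = u ^ 2 + 5 * v ^ 2) → f n = (n : ℂ) ∨ f n = -(n : ℂ))) ∨
    (∀ n : ℕ, 1 ≤ n →
      ((∃ u v : ℕ, 0 < u ∧ 0 < v ∧ n = u ^ 2 + 5 * v ^ 2) → f n = 1 / 6) ∧
      (¬ (∃ u v : ℕ, 0 < u ∧ 0 < v ∧ n = u ^ 2 + 5 * v ^ 2) → f n = 1 / 6 ∨ f n = -(1 / 6))) := by
  have coll : ∀ u v u' v' : ℕ, 0 < u → 0 < v → 0 < u' → 0 < v' →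
      u ^ 2 + 5 * v ^ 2 = u' ^ 2 + 5 * v' ^ 2 →
      f u ^ 2 + 5 * f v ^ 2 = f u' ^ 2 + 5 * f v' ^ 2 := by
    intro u v u' v' hu hv hu' hv' h
    have h1 := hf u v hu hv
    have h2 := hf u' v' hu' hv'
    rw [h] at h1
    linear_combination h2 - h1
  have E6 : f 6 = 6 * f 1 ^ 2 := by
    have h := hf 1 1 one_pos one_pos; norm_num at h; linear_combination h
  have E9 : f 9 = f 2 ^ 2 + 5 * f 1 ^ 2 := by
    have h := hf 2 1 (by norm_num) one_pos; norm_num at h; linear_combination h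
  have E14 : f 14 = f 3 ^ 2 + 5 * f 1 ^ 2 := by
    have h := hf 3 1 (by norm_num) one_pos; norm_num at h; linear_combination h
  have E54 : f 7 ^ 2 + 5 * f 1 ^ 2 = f 3 ^ 2 + 5 * f 3 ^ 2 :=
    coll 7 1 3 3 (by norm_num) (by norm_num) (by norm_num) (by norm_num) (by norm_num)
  have E69 : f 8 ^ 2 + 5 * f 1 ^ 2 = f 7 ^ 2 + 5 * f 2 ^ 2 :=
    coll 8 1 7 2 (by norm_num) (by norm_num) (by norm_num) (by norm_num) (by norm_num)
  have E84 : f 8 ^ 2 + 5 * f 2 ^ 2 = f 2 ^ 2 + 5 * f 4 ^ 2 :=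
    coll 8 2 2 4 (by norm_num) (by norm_num) (by norm_num) (by norm_num) (by norm_num)
  have E105 : f 10 ^ 2 + 5 * f 1 ^ 2 = f 5 ^ 2 + 5 * f 4 ^ 2 :=
    coll 10 1 5 4 (by norm_num) (by norm_num) (by norm_num) (by norm_num) (by norm_num)
  have E126ac : f 11 ^ 2 + 5 * f 1 ^ 2 = f 1 ^ 2 + 5 * f 5 ^ 2 :=
    coll 11 1 1 5 (by norm_num) (by norm_num) (by norm_num) (by norm_num) (by norm_num)
  have E126bc : f 9 ^ 2 + 5 * f 3 ^ 2 = f 1 ^ 2 + 5 * f 5 ^ 2 :=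
    coll 9 3 1 5 (by norm_num) (by norm_num) (by norm_num) (by norm_num) (by norm_num)
  have E129 : f 7 ^ 2 + 5 * f 4 ^ 2 = f 2 ^ 2 + 5 * f 5 ^ 2 :=
    coll 7 4 2 5 (by norm_num) (by norm_num) (by norm_num) (by norm_num) (by norm_num)
  have E141 : f 11 ^ 2 + 5 * f 2 ^ 2 = f 4 ^ 2 + 5 * f 5 ^ 2 :=
    coll 11 2 4 5 (by norm_num) (by norm_num) (by norm_num) (by norm_num) (by norm_num)
  have E189 : f 8 ^ 2 + 5 * f 5 ^ 2 = f 3 ^ 2 + 5 * f 6 ^ 2 :=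
    coll 8 5 3 6 (by norm_num) (by norm_num) (by norm_num) (by norm_num) (by norm_num)
  have E201 : f 14 ^ 2 + 5 * f 1 ^ 2 = f 11 ^ 2 + 5 * f 4 ^ 2 :=
    coll 14 1 11 4 (by norm_num) (by norm_num) (by norm_num) (by norm_num) (by norm_num)
  -- derived equations
  have hT : f 11 ^ 2 = 5 * f 5 ^ 2 - 4 * f 1 ^ 2 := by linear_combination E126ac
  have hD : f 4 ^ 2 = 5 * f 2 ^ 2 - 4 * f 1 ^ 2 := by linear_combination hT - E141
  have hP : f 7 ^ 2 = 6 * f 3 ^ 2 - 5 * f 1 ^ 2 := by linear_combination E54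
  have hQ : f 8 ^ 2 = 6 * f 3 ^ 2 + 5 * f 2 ^ 2 - 10 * f 1 ^ 2 := by linear_combination E69 + hP
  have hC : 6 * f 3 ^ 2 = 16 * f 2 ^ 2 - 10 * f 1 ^ 2 := by linear_combination E84 - hQ + 5*hD
  have hE5 : 5 * f 5 ^ 2 = 40 * f 2 ^ 2 - 35 * f 1 ^ 2 := by
    linear_combination hP + 5*hD + hC - E129
  have hF6sq : f 6 ^ 2 = 36 * f 1 ^ 4 := by rw [E6]; ring
  have hB35 : 35 * f 2 ^ 2 = 108 * f 1 ^ 4 + 32 * f 1 ^ 2 := by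
    linear_combination (3/5)*E189 - (3/5)*hQ - (3/5)*hE5 - (1/2)*hC + 3*hF6sq
  have hb : f 2 ^ 2 = (108 * f 1 ^ 4 + 32 * f 1 ^ 2) / 35 := by linear_combination (1/35)*hB35
  have hc : f 3 ^ 2 = (288 * f 1 ^ 4 + 27 * f 1 ^ 2) / 35 := by
    linear_combination (1/6)*hC + (8/3)*hb
  have hd : f 4 ^ 2 = (108 * f 1 ^ 4 + 4 * f 1 ^ 2) / 7 := by linear_combination hD + 5*hb
  have he : f 5 ^ 2 = (864 * f 1 ^ 4 + 11 * f 1 ^ 2) / 35 := by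
    linear_combination (1/5)*hE5 + 8*hb
  have h10sq : f 10 ^ 2 = f 5 ^ 2 + 5 * f 4 ^ 2 - 5 * f 1 ^ 2 := by linear_combination E105
  have h9sq : (f 2 ^ 2 + 5 * f 1 ^ 2) ^ 2 = f 1 ^ 2 + 5 * f 5 ^ 2 - 5 * f 3 ^ 2 := by
    rw [← E9]; linear_combination E126bc
  have h14sq : (f 3 ^ 2 + 5 * f 1 ^ 2) ^ 2 = 5 * f 5 ^ 2 + 5 * f 4 ^ 2 - 9 * f 1 ^ 2 := by
    rw [← E14]; linear_combination E201 + hT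
  rw [hb, hc, he] at h9sq
  rw [hc, hd, he] at h14sq
  have hkey : f 1 ^ 2 * ((f 1 ^ 2 - 1) * (36 * f 1 ^ 2 - 1)) = 0 := by
    linear_combination (14/9)*h9sq - (7/32)*h14sq
  have hrec : ∀ m : ℕ, f (m+11) ^ 2 + 5 * f (m+5) ^ 2 = f (m+1) ^ 2 + 5 * f (m+7) ^ 2 :=
    fun m => coll (m+11) (m+5) (m+1) (m+7) (by omega) (by omega) (by omega) (by omega) (by ring)
  rcases mul_eq_zero.mp hkey with hA | h'
  · -- case f 1 ^ 2 = 0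
    have hA4 : f 1 ^ 4 = 0 := by linear_combination (f 1 ^ 2) * hA
    have v2 : f 2 ^ 2 = 0 := by rw [hb, hA4, hA]; norm_num
    have v3 : f 3 ^ 2 = 0 := by rw [hc, hA4, hA]; norm_num
    have v4 : f 4 ^ 2 = 0 := by rw [hd, hA4, hA]; norm_num
    have v5 : f 5 ^ 2 = 0 := by rw [he, hA4, hA]; norm_num
    have v6 : f 6 ^ 2 = 0 := by rw [hF6sq, hA4]; norm_num
    have v7 : f 7 ^ 2 = 0 := by rw [hP, v3, hA]; norm_num
    have v8 : f 8 ^ 2 = 0 := by rw [hQ, v3, v2, hA]; norm_num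
    have v9 : f 9 ^ 2 = 0 := by rw [E9, v2, hA]; norm_num
    have v10 : f 10 ^ 2 = 0 := by rw [h10sq, v5, v4, hA]; norm_num
    have hbase : ∀ k : ℕ, 1 ≤ k → k ≤ 10 → f k ^ 2 = (0:ℂ) * (k : ℂ) ^ 2 + 0 := by
      intro k h1 h2
      interval_cases k <;> norm_num [hA, v2, v3, v4, v5, v6, v7, v8, v9, v10]
    have key := aux_k5 f 0 0 hrec hbase
    refine Or.inl (fun n hn => ?_)
    have h0 : f n ^ 2 = 0 := by linear_combination key n hn
    exact pow_eq_zero_iff (two_ne_zero) |>.mp h0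
  rcases mul_eq_zero.mp h' with hA | hA
  · -- case f 1 ^ 2 = 1
    have hA1 : f 1 ^ 2 = 1 := by linear_combination hA
    have hA4 : f 1 ^ 4 = 1 := by linear_combination (f 1 ^ 2 + 1) * hA1
    have v2 : f 2 ^ 2 = 4 := by rw [hb, hA4, hA1]; norm_num
    have v3 : f 3 ^ 2 = 9 := by rw [hc, hA4, hA1]; norm_num
    have v4 : f 4 ^ 2 = 16 := by rw [hd, hA4, hA1]; norm_num
    have v5 : f 5 ^ 2 = 25 := by rw [he, hA4, hA1]; norm_num
    have v6 : f 6 ^ 2 = 36 := by rw [hF6sq, hA4]; norm_num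
    have v7 : f 7 ^ 2 = 49 := by rw [hP, v3, hA1]; norm_num
    have v8 : f 8 ^ 2 = 64 := by rw [hQ, v3, v2, hA1]; norm_num
    have v9 : f 9 ^ 2 = 81 := by rw [E9, v2, hA1]; norm_num
    have v10 : f 10 ^ 2 = 100 := by rw [h10sq, v5, v4, hA1]; norm_num
    have hbase : ∀ k : ℕ, 1 ≤ k → k ≤ 10 → f k ^ 2 = (1:ℂ) * (k : ℂ) ^ 2 + 0 := by
      intro k h1 h2
      interval_cases k <;> norm_num [hA1, v2, v3, v4, v5, v6, v7, v8, v9, v10]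
    have key := aux_k5 f 1 0 hrec hbase
    refine Or.inr (Or.inl (fun n hn => ⟨?_, ?_⟩))
    · rintro ⟨u, v, hu, hv, rfl⟩
      rw [hf u v hu hv]
      have ku := key u hu
      have kv := key v hv
      push_cast
      linear_combination ku + 5*kv
    · intro _
      have h := key n hn
      have h2 : (f n - (n:ℂ)) * (f n + (n:ℂ)) = 0 := by linear_combination h
      rcases mul_eq_zero.mp h2 with h3 | h3
      · exact Or.inl (by linear_combination h3)
      · exact Or.inr (by linear_combination h3)
  · -- case f 1 ^ 2 = 1/36
    have hA36 : f 1 ^ 2 = 1/36 := by linear_combination (1/36) * hA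
    have hA4 : f 1 ^ 4 = 1/1296 := by linear_combination (f 1 ^ 2 + 1/36) * hA36
    have v2 : f 2 ^ 2 = 1/36 := by rw [hb, hA4, hA36]; norm_num
    have v3 : f 3 ^ 2 = 1/36 := by rw [hc, hA4, hA36]; norm_num
    have v4 : f 4 ^ 2 = 1/36 := by rw [hd, hA4, hA36]; norm_num
    have v5 : f 5 ^ 2 = 1/36 := by rw [he, hA4, hA36]; norm_num
    have v6 : f 6 ^ 2 = 1/36 := by rw [hF6sq, hA4]; norm_num
    have v7 : f 7 ^ 2 = 1/36 := by rw [hP, v3, hA36]; norm_num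
    have v8 : f 8 ^ 2 = 1/36 := by rw [hQ, v3, v2, hA36]; norm_num
    have v9 : f 9 ^ 2 = 1/36 := by rw [E9, v2, hA36]; norm_num
    have v10 : f 10 ^ 2 = 1/36 := by rw [h10sq, v5, v4, hA36]; norm_num
    have hbase : ∀ k : ℕ, 1 ≤ k → k ≤ 10 → f k ^ 2 = (0:ℂ) * (k : ℂ) ^ 2 + 1/36 := by
      intro k h1 h2
      interval_cases k <;> norm_num [hA36, v2, v3, v4, v5, v6, v7, v8, v9, v10]
    have key := aux_k5 f 0 (1/36) hrec hbase
    refine Or.inr (Or.inr (fun n hn => ⟨?_, ?_⟩))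
    · rintro ⟨u, v, hu, hv, rfl⟩
      rw [hf u v hu hv]
      have ku := key u hu
      have kv := key v hv
      linear_combination ku + 5*kv
    · intro _
      have h := key n hn
      have h2 : (f n - 1/6) * (f n + 1/6) = 0 := by linear_combination h
      rcases mul_eq_zero.mp h2 with h3 | h3
      · exact Or.inl (by linear_combination h3)
      · exact Or.inr (by linear_combination h3)
end
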